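/- arXiv:1304.5376 — 11 statements merged into one kernel-verified Lean document; each statement's English description precedes it below -/
import Mathlib

section
/- Let R be a commutative ring and let 0 → A'_• → A_• → A''_• → 0 be a short exact sequence of inductive systems of R-modules indexed by ℕ. If the system (A_n) is (N,φ)-essentially constant and the system (A''_n) is (N'',φ'')-essentially constant, then the system (A'_n) is (φ''(N), φ)-essentially constant. (This is one direction of Proposition 5.6 of the paper, with the explicit constants produced by its proof.) -/
/-- An inductive system `(A n)` of `R`-modules with transition maps `a` (satisfying the
usual identity and composition laws) is `(N, φ)`-essentially constant: `φ j ≥ j` for all `j`,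
`ker (a_{j,φ(j)}) = ker (a_{j,k})` for all `k ≥ φ j`, and
`im (a_{N,φ(j)}) = im (a_{j,φ(j)})` for all `j ≥ N`. -/
def IsEssentiallyConstant {R : Type*} [CommRing R]
    (A : ℕ → Type*) [∀ n, AddCommGroup (A n)] [∀ n, Module R (A n)]
    (a : ∀ n m, n ≤ m → (A n →ₗ[R] A m)) (N : ℕ) (φ : ℕ → ℕ) : Prop :=
  (∀ j, j ≤ φ j) ∧
  (∀ j k (h₁ : j ≤ φ j) (h₂ : j ≤ k), φ j ≤ k →
    LinearMap.ker (a j (φ j) h₁) = LinearMap.ker (a j k h₂)) ∧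
  (∀ j, N ≤ j → ∀ (h₁ : N ≤ φ j) (h₂ : j ≤ φ j),
    LinearMap.range (a N (φ j) h₁) = LinearMap.range (a j (φ j) h₂))

/-- One direction of Proposition 5.6: in a short exact sequence of inductive systems
`0 → A' → A → A'' → 0`, if `A` is `(N, φ)`-essentially constant and `A''` is
`(N'', φ'')`-essentially constant, then `A'` is `(φ''(N), φ)`-essentially constant. -/
theorem stmt0 {R : Type*} [CommRing R]
    (A' A A'' : ℕ → Type*)
    [∀ n, AddCommGroup (A' n)] [∀ n, Module R (A' n)]
    [∀ n, AddCommGroup (A n)] [∀ n, Module R (A n)]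
    [∀ n, AddCommGroup (A'' n)] [∀ n, Module R (A'' n)]
    (a' : ∀ n m, n ≤ m → (A' n →ₗ[R] A' m))
    (a : ∀ n m, n ≤ m → (A n →ₗ[R] A m))
    (a'' : ∀ n m, n ≤ m → (A'' n →ₗ[R] A'' m))
    (ha'_id : ∀ n, a' n n le_rfl = LinearMap.id)
    (ha_id : ∀ n, a n n le_rfl = LinearMap.id)
    (ha''_id : ∀ n, a'' n n le_rfl = LinearMap.id)
    (ha'_comp : ∀ n m k (h₁ : n ≤ m) (h₂ : m ≤ k),
      (a' m k h₂).comp (a' n m h₁) = a' n k (h₁.trans h₂))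
    (ha_comp : ∀ n m k (h₁ : n ≤ m) (h₂ : m ≤ k),
      (a m k h₂).comp (a n m h₁) = a n k (h₁.trans h₂))
    (ha''_comp : ∀ n m k (h₁ : n ≤ m) (h₂ : m ≤ k),
      (a'' m k h₂).comp (a'' n m h₁) = a'' n k (h₁.trans h₂))
    (u : ∀ n, A' n →ₗ[R] A n) (v : ∀ n, A n →ₗ[R] A'' n)
    (hu_comm : ∀ n m (h : n ≤ m), (u m).comp (a' n m h) = (a n m h).comp (u n))
    (hv_comm : ∀ n m (h : n ≤ m), (v m).comp (a n m h) = (a'' n m h).comp (v n))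
    (hu_inj : ∀ n, Function.Injective (u n))
    (hv_surj : ∀ n, Function.Surjective (v n))
    (hexact : ∀ n, LinearMap.range (u n) = LinearMap.ker (v n))
    (N N'' : ℕ) (φ φ'' : ℕ → ℕ)
    (hA : IsEssentiallyConstant A a N φ)
    (hA'' : IsEssentiallyConstant A'' a'' N'' φ'') :
    IsEssentiallyConstant A' a' (φ'' N) φ := by

  obtain ⟨hφ, hker, him⟩ := hA
  obtain ⟨hφ'', hker'', _⟩ := hA''
  refine ⟨hφ, ?_, ?_⟩
  · intro j k h₁ h₂ hk
    ext x
    simp only [LinearMap.mem_ker]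
    constructor
    · intro hx
      have h0 : a' j k h₂ x = a' (φ j) k hk (a' j (φ j) h₁ x) := by
        rw [← LinearMap.comp_apply, ha'_comp]
      rw [h0, hx, map_zero]
    · intro hx
      have h1 : a j k h₂ (u j x) = 0 := by
        have := congrArg (fun f => f x) (hu_comm j k h₂)
        simp only [LinearMap.comp_apply] at this
        rw [← this, hx, map_zero]
      have h2 : u j x ∈ LinearMap.ker (a j (φ j) h₁) := by
        rw [hker j k h₁ h₂ hk]; exact h1
      have h3 : u (φ j) (a' j (φ j) h₁ x) = 0 := by
        have := congrArg (fun f => f x) (hu_comm j (φ j) h₁)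
        simp only [LinearMap.comp_apply] at this
        rw [this]; exact h2
      apply hu_inj (φ j)
      rw [h3, map_zero]
  · intro j hj h₁ h₂
    have hNM : N ≤ φ'' N := hφ'' N
    have hNj : N ≤ j := hNM.trans hj
    have hNφj : N ≤ φ j := hNj.trans h₂
    apply le_antisymm
    · rintro _ ⟨x, rfl⟩
      refine ⟨a' (φ'' N) j hj x, ?_⟩
      rw [← LinearMap.comp_apply, ha'_comp]
    · rintro _ ⟨x', rfl⟩
      have hrange := him j hNj hNφj h₂
      have hmem : a j (φ j) h₂ (u j x') ∈ LinearMap.range (a N (φ j) hNφj) := by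
        rw [hrange]; exact ⟨u j x', rfl⟩
      obtain ⟨y, hy⟩ := hmem
      have hvux : v j (u j x') = 0 := by
        have : u j x' ∈ LinearMap.ker (v j) := by
          rw [← hexact j]; exact ⟨x', rfl⟩
        exact this
      have hv0 : v (φ j) (a j (φ j) h₂ (u j x')) = 0 := by
        have := congrArg (fun f => f (u j x')) (hv_comm j (φ j) h₂)
        simp only [LinearMap.comp_apply] at this
        rw [this, hvux, map_zero]
      have hvy : a'' N (φ j) hNφj (v N y) = 0 := by
        have := congrArg (fun f => f y) (hv_comm N (φ j) hNφj)
        simp only [LinearMap.comp_apply] at this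
        rw [← this, hy, hv0]
      have hker2 : v N y ∈ LinearMap.ker (a'' N (φ'' N) hNM) := by
        rw [hker'' N (φ j) hNM hNφj h₁]; exact hvy
      have hvM : v (φ'' N) (a N (φ'' N) hNM y) = 0 := by
        have := congrArg (fun f => f y) (hv_comm N (φ'' N) hNM)
        simp only [LinearMap.comp_apply] at this
        rw [this]; exact hker2
      have hmem2 : a N (φ'' N) hNM y ∈ LinearMap.range (u (φ'' N)) := by
        rw [hexact (φ'' N)]; exact hvM
      obtain ⟨z, hz⟩ := hmem2
      refine ⟨z, hu_inj (φ j) ?_⟩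
      have e1 : u (φ j) (a' (φ'' N) (φ j) h₁ z) = a (φ'' N) (φ j) h₁ (u (φ'' N) z) := by
        have := congrArg (fun f => f z) (hu_comm (φ'' N) (φ j) h₁)
        simpa using this
      have e2 : u (φ j) (a' j (φ j) h₂ x') = a j (φ j) h₂ (u j x') := by
        have := congrArg (fun f => f x') (hu_comm j (φ j) h₂)
        simpa using this
      rw [e1, e2, hz, ← hy, ← LinearMap.comp_apply, ha_comp]
end

section
/- Let R be a commutative ring and let 0 → A'_• → A_• → A''_• → 0 be a short exact sequence of inductive systems of R-modules indexed by ℕ. If the system (A'_n) is (N',φ')-essentially constant and the system (A''_n) is (N'',φ'')-essentially constant, then the system (A_n) is (max(N',N''), φ'∘φ'')-essentially constant. (This is one direction of Proposition 5.6 of the paper, with the explicit constants produced by its proof.) -/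
/-- One direction of Proposition 5.6: in a short exact sequence of inductive systems
`0 → A' → A → A'' → 0`, if `A'` is `(N', φ')`-essentially constant and `A''` is
`(N'', φ'')`-essentially constant, then `A` is `(max N' N'', φ' ∘ φ'')`-essentially
constant. -/
theorem stmt2 {R : Type*} [CommRing R]
    (A' A A'' : ℕ → Type*)
    [∀ n, AddCommGroup (A' n)] [∀ n, Module R (A' n)]
    [∀ n, AddCommGroup (A n)] [∀ n, Module R (A n)]
    [∀ n, AddCommGroup (A'' n)] [∀ n, Module R (A'' n)]
    (a' : ∀ n m, n ≤ m → (A' n →ₗ[R] A' m))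
    (a : ∀ n m, n ≤ m → (A n →ₗ[R] A m))
    (a'' : ∀ n m, n ≤ m → (A'' n →ₗ[R] A'' m))
    (ha'_id : ∀ n, a' n n le_rfl = LinearMap.id)
    (ha_id : ∀ n, a n n le_rfl = LinearMap.id)
    (ha''_id : ∀ n, a'' n n le_rfl = LinearMap.id)
    (ha'_comp : ∀ n m k (h₁ : n ≤ m) (h₂ : m ≤ k),
      (a' m k h₂).comp (a' n m h₁) = a' n k (h₁.trans h₂))
    (ha_comp : ∀ n m k (h₁ : n ≤ m) (h₂ : m ≤ k),
      (a m k h₂).comp (a n m h₁) = a n k (h₁.trans h₂))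
    (ha''_comp : ∀ n m k (h₁ : n ≤ m) (h₂ : m ≤ k),
      (a'' m k h₂).comp (a'' n m h₁) = a'' n k (h₁.trans h₂))
    (u : ∀ n, A' n →ₗ[R] A n) (v : ∀ n, A n →ₗ[R] A'' n)
    (hu_comm : ∀ n m (h : n ≤ m), (u m).comp (a' n m h) = (a n m h).comp (u n))
    (hv_comm : ∀ n m (h : n ≤ m), (v m).comp (a n m h) = (a'' n m h).comp (v n))
    (hu_inj : ∀ n, Function.Injective (u n))
    (hv_surj : ∀ n, Function.Surjective (v n))
    (hexact : ∀ n, LinearMap.range (u n) = LinearMap.ker (v n))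
    (N' N'' : ℕ) (φ' φ'' : ℕ → ℕ)
    (hA' : IsEssentiallyConstant A' a' N' φ')
    (hA'' : IsEssentiallyConstant A'' a'' N'' φ'') :
    IsEssentiallyConstant A a (max N' N'') (φ' ∘ φ'') := by
  obtain ⟨hφ'1, hφ'k, hφ'r⟩ := hA'
  obtain ⟨hφ''1, hφ''k, hφ''r⟩ := hA''
  have hφ : ∀ j, j ≤ φ' (φ'' j) := fun j => (hφ''1 j).trans (hφ'1 _)
  refine ⟨hφ, ?_, ?_⟩
  · -- kernel condition
    intro j k h₁ h₂ h₃
    set m := φ'' j with hm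
    set p := φ' m with hp
    have hjm : j ≤ m := hφ''1 j
    have hmp : m ≤ p := hφ'1 m
    have hmk : m ≤ k := hmp.trans h₃
    apply le_antisymm
    · intro x hx
      have hx0 : a j p h₁ x = 0 := hx
      have hc := LinearMap.congr_fun (ha_comp j p k h₁ h₃) x
      simp only [LinearMap.comp_apply] at hc
      have : a j k h₂ x = 0 := by rw [← hc, hx0, map_zero]
      exact this
    · intro x hx
      have hx0 : a j k h₂ x = 0 := hx
      -- v_j x killed by a''_{j,k}
      have hvk : a'' j k h₂ (v j x) = 0 := by
        have hc := LinearMap.congr_fun (hv_comm j k h₂) x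
        simp only [LinearMap.comp_apply] at hc
        rw [← hc, hx0, map_zero]
      have hker'' := hφ''k j k hjm h₂ hmk
      have hvm : a'' j m hjm (v j x) = 0 := by
        have : v j x ∈ LinearMap.ker (a'' j k h₂) := hvk
        rw [← hker''] at this
        exact this
      -- so a_{j,m} x ∈ ker v_m = range u_m
      have hmem : a j m hjm x ∈ LinearMap.range (u m) := by
        rw [hexact m, LinearMap.mem_ker]
        have hc := LinearMap.congr_fun (hv_comm j m hjm) x
        simp only [LinearMap.comp_apply] at hc
        rw [hc, hvm]
      obtain ⟨y, hy⟩ := hmem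
      -- a'_{m,k} y = 0
      have hyk : a' m k hmk y = 0 := by
        apply hu_inj k
        have hc := LinearMap.congr_fun (hu_comm m k hmk) y
        simp only [LinearMap.comp_apply] at hc
        rw [map_zero, hc, hy]
        have hc2 := LinearMap.congr_fun (ha_comp j m k hjm hmk) x
        simp only [LinearMap.comp_apply] at hc2
        rw [hc2, hx0]
      have hker' := hφ'k m k hmp hmk h₃
      have hyp : a' m p hmp y = 0 := by
        have : y ∈ LinearMap.ker (a' m k hmk) := hyk
        rw [← hker'] at this
        exact this
      -- conclude
      show a j p h₁ x = 0
      have hc := LinearMap.congr_fun (ha_comp j m p hjm hmp) x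
      simp only [LinearMap.comp_apply] at hc
      rw [← hc, ← hy]
      have hc2 := LinearMap.congr_fun (hu_comm m p hmp) y
      simp only [LinearMap.comp_apply] at hc2
      rw [← hc2, hyp, map_zero]
  · -- image condition
    intro j hNj h₁ h₂
    set N := max N' N'' with hN
    set m := φ'' j with hm
    set p := φ' m with hp
    have hjm : j ≤ m := hφ''1 j
    have hmp : m ≤ p := hφ'1 m
    have hNj' : N ≤ j := hNj
    apply le_antisymm
    · rintro _ ⟨x, rfl⟩
      refine ⟨a N j hNj' x, ?_⟩
      exact LinearMap.congr_fun (ha_comp N j p hNj' h₂) x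
    · rintro _ ⟨x, rfl⟩
      -- chase for a_{j,p} x ∈ range a_{N,p}
      have hN''j : N'' ≤ j := le_trans (le_max_right N' N'') hNj
      have hN''N : N'' ≤ N := le_max_right N' N''
      have hN'N : N' ≤ N := le_max_left N' N''
      have hN''m : N'' ≤ m := hN''j.trans hjm
      have hNm : N ≤ m := hNj.trans hjm
      -- image condition for A'' at j
      have himg'' := hφ''r j hN''j hN''m hjm
      -- a''_{j,m}(v_j x) ∈ range a''_{N'',m}
      have hmem'' : a'' j m hjm (v j x) ∈ LinearMap.range (a'' N'' m hN''m) := by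
        rw [himg'']
        exact ⟨v j x, rfl⟩
      obtain ⟨w, hw⟩ := hmem''
      -- push w to level N
      obtain ⟨z, hz⟩ := hv_surj N (a'' N'' N hN''N w)
      -- v_m (a_{j,m} x - a_{N,m} z) = 0
      have hdiff : v m (a j m hjm x - a N m hNm z) = 0 := by
        have h1 := LinearMap.congr_fun (hv_comm j m hjm) x
        have h2 := LinearMap.congr_fun (hv_comm N m hNm) z
        simp only [LinearMap.comp_apply] at h1 h2
        have h3 := LinearMap.congr_fun (ha''_comp N'' N m hN''N hNm) w
        simp only [LinearMap.comp_apply] at h3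
        rw [map_sub, h1, h2, hz, h3, hw, sub_self]
      have hmemu : a j m hjm x - a N m hNm z ∈ LinearMap.range (u m) := by
        rw [hexact m, LinearMap.mem_ker]; exact hdiff
      obtain ⟨y, hy⟩ := hmemu
      -- image condition for A' at m
      have hN'm : N' ≤ m := hN'N.trans hNm
      have hN'p : N' ≤ p := hN'm.trans hmp
      have himg' := hφ'r m hN'm hN'p hmp
      have hmem' : a' m p hmp y ∈ LinearMap.range (a' N' p hN'p) := by
        rw [himg']; exact ⟨y, rfl⟩
      obtain ⟨y', hy'⟩ := hmem'
      -- final: a_{j,p} x = a_{N,p} (z + u_N (a'_{N',N} y'))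
      have hNp : N ≤ p := hNm.trans hmp
      refine ⟨z + u N (a' N' N hN'N y'), ?_⟩
      have hjp := LinearMap.congr_fun (ha_comp j m p hjm hmp) x
      have hNmp := LinearMap.congr_fun (ha_comp N m p hNm hmp) z
      simp only [LinearMap.comp_apply] at hjp hNmp
      have hum := LinearMap.congr_fun (hu_comm m p hmp) y
      simp only [LinearMap.comp_apply] at hum
      have huN := LinearMap.congr_fun (hu_comm N p hNp) (a' N' N hN'N y')
      simp only [LinearMap.comp_apply] at huN
      have hycomp := LinearMap.congr_fun (ha'_comp N' N p hN'N hNp) y'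
      simp only [LinearMap.comp_apply] at hycomp
      calc a N p hNp (z + u N (a' N' N hN'N y'))
          = a N p hNp z + a N p hNp (u N (a' N' N hN'N y')) := map_add _ _ _
        _ = a N p hNp z + u p (a' N p hNp (a' N' N hN'N y')) := by rw [← huN]
        _ = a N p hNp z + u p (a' N' p hN'p y') := by rw [hycomp]
        _ = a N p hNp z + u p (a' m p hmp y) := by rw [hy']
        _ = a N p hNp z + a m p hmp (u m y) := by rw [hum]
        _ = a N p hNp z + a m p hmp (a j m hjm x - a N m hNm z) := by rw [hy]
        _ = a j p (hjm.trans hmp) x := by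
            rw [map_sub, hjp, hNmp]; abel
end

section
/- (Proposition 5.9.) Let R be a commutative ring, let A_• and B_• be inductive systems of R-modules indexed by ℕ, let u_• : A_• → B_• be a morphism of inductive systems (R-linear maps u_n : A_n → B_n commuting with the transition maps), and let τ : ℕ → ℕ be a strictly increasing function. Suppose there are R-linear maps h_n : B_n → A_{τ(n)} such that for every n: h_n ∘ u_n equals the transition map A_n → A_{τ(n)}, and u_{τ(n)} ∘ h_n equals the transition map B_n → B_{τ(n)}. If B_• is (N,φ)-essentially constant, then A_• is (τ(N), τ∘φ)-essentially constant. -/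
/-- Proposition 5.9: if a morphism `u : A → B` of inductive systems admits maps
`h n : B n → A (τ n)` (for a strictly increasing `τ`) making the two triangles commute,
and `B` is `(N, φ)`-essentially constant, then `A` is `(τ N, τ ∘ φ)`-essentially
constant. -/
theorem stmt3 {R : Type*} [CommRing R]
    (A B : ℕ → Type*)
    [∀ n, AddCommGroup (A n)] [∀ n, Module R (A n)]
    [∀ n, AddCommGroup (B n)] [∀ n, Module R (B n)]
    (a : ∀ n m, n ≤ m → (A n →ₗ[R] A m))
    (b : ∀ n m, n ≤ m → (B n →ₗ[R] B m))
    (ha_id : ∀ n, a n n le_rfl = LinearMap.id)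
    (hb_id : ∀ n, b n n le_rfl = LinearMap.id)
    (ha_comp : ∀ n m k (h₁ : n ≤ m) (h₂ : m ≤ k),
      (a m k h₂).comp (a n m h₁) = a n k (h₁.trans h₂))
    (hb_comp : ∀ n m k (h₁ : n ≤ m) (h₂ : m ≤ k),
      (b m k h₂).comp (b n m h₁) = b n k (h₁.trans h₂))
    (u : ∀ n, A n →ₗ[R] B n)
    (hu_comm : ∀ n m (h : n ≤ m), (u m).comp (a n m h) = (b n m h).comp (u n))
    (τ : ℕ → ℕ) (hτ : StrictMono τ)
    (h : ∀ n, B n →ₗ[R] A (τ n))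
    (hh₁ : ∀ n (hn : n ≤ τ n), (h n).comp (u n) = a n (τ n) hn)
    (hh₂ : ∀ n (hn : n ≤ τ n), (u (τ n)).comp (h n) = b n (τ n) hn)
    (N : ℕ) (φ : ℕ → ℕ)
    (hB : IsEssentiallyConstant B b N φ) :
    IsEssentiallyConstant A a (τ N) (τ ∘ φ) := by
  obtain ⟨hφ, hker, hran⟩ := hB
  have comp_a : ∀ n m k (h₁ : n ≤ m) (h₂ : m ≤ k) (h₃ : n ≤ k) (x : A n),
      a n k h₃ x = a m k h₂ (a n m h₁ x) := by
    intro n m k h₁ h₂ h₃ x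
    exact (LinearMap.congr_fun (ha_comp n m k h₁ h₂) x).symm
  have comp_b : ∀ n m k (h₁ : n ≤ m) (h₂ : m ≤ k) (h₃ : n ≤ k) (x : B n),
      b n k h₃ x = b m k h₂ (b n m h₁ x) := by
    intro n m k h₁ h₂ h₃ x
    exact (LinearMap.congr_fun (hb_comp n m k h₁ h₂) x).symm
  have hle : ∀ j, j ≤ τ (φ j) := fun j => (hφ j).trans (hτ.le_apply)
  refine ⟨hle, ?_, ?_⟩
  · intro j k h₁ h₂ hk
    apply le_antisymm
    · intro x hx
      simp only [LinearMap.mem_ker] at hx ⊢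
      rw [comp_a j (τ (φ j)) k h₁ hk h₂ x, show a j (τ (φ j)) h₁ x = 0 from hx, map_zero]
    · intro x hx
      simp only [LinearMap.mem_ker] at hx ⊢
      -- b j k (u j x) = 0
      have hbk : b j k (h₂) (u j x) = 0 := by
        have := LinearMap.congr_fun (hu_comm j k h₂) x
        simp only [LinearMap.comp_apply] at this
        rw [← this, hx, map_zero]
      have hbφ : b j (φ j) (hφ j) (u j x) = 0 := by
        have hmem : u j x ∈ LinearMap.ker (b j k h₂) := hbk
        rw [← hker j k (hφ j) h₂ ((hτ.le_apply).trans hk)] at hmem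
        exact hmem
      calc a j (τ (φ j)) h₁ x
          = a (φ j) (τ (φ j)) hτ.le_apply (a j (φ j) (hφ j) x) :=
            comp_a j (φ j) (τ (φ j)) (hφ j) hτ.le_apply h₁ x
        _ = h (φ j) (u (φ j) (a j (φ j) (hφ j) x)) :=
            (LinearMap.congr_fun (hh₁ (φ j) hτ.le_apply) _).symm
        _ = h (φ j) (b j (φ j) (hφ j) (u j x)) := by
            congr 1
            exact LinearMap.congr_fun (hu_comm j (φ j) (hφ j)) x
        _ = 0 := by rw [hbφ, map_zero]
  · intro j hj h₁ h₂
    have hNτN : N ≤ τ N := hτ.le_apply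
    have hNj : N ≤ j := hNτN.trans hj
    have hNφj : N ≤ φ j := hNj.trans (hφ j)
    have hτNφj : τ N ≤ φ j := hj.trans (hφ j)
    apply le_antisymm
    · rintro _ ⟨x, rfl⟩
      exact ⟨a (τ N) j hj x, (comp_a (τ N) j (τ (φ j)) hj h₂ h₁ x).symm⟩
    · rintro _ ⟨x, rfl⟩
      -- b j (φ j) (u j x) ∈ range b N (φ j)
      have hmem : b j (φ j) (hφ j) (u j x) ∈ LinearMap.range (b N (φ j) hNφj) := by
        rw [hran j hNj hNφj (hφ j)]
        exact ⟨u j x, rfl⟩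
      obtain ⟨y, hy⟩ := hmem
      refine ⟨h N y, ?_⟩
      calc a (τ N) (τ (φ j)) h₁ (h N y)
          = a (φ j) (τ (φ j)) hτ.le_apply (a (τ N) (φ j) hτNφj (h N y)) :=
            comp_a (τ N) (φ j) (τ (φ j)) hτNφj hτ.le_apply h₁ _
        _ = h (φ j) (u (φ j) (a (τ N) (φ j) hτNφj (h N y))) :=
            (LinearMap.congr_fun (hh₁ (φ j) hτ.le_apply) _).symm
        _ = h (φ j) (b (τ N) (φ j) hτNφj (u (τ N) (h N y))) := by
            congr 1
            exact LinearMap.congr_fun (hu_comm (τ N) (φ j) hτNφj) _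
        _ = h (φ j) (b (τ N) (φ j) hτNφj (b N (τ N) hNτN y)) := by
            congr 2
            exact LinearMap.congr_fun (hh₂ N hNτN) y
        _ = h (φ j) (b N (φ j) hNφj y) := by
            congr 1
            exact (comp_b N (τ N) (φ j) hNτN hτNφj hNφj y).symm
        _ = h (φ j) (b j (φ j) (hφ j) (u j x)) := by rw [hy]
        _ = h (φ j) (u (φ j) (a j (φ j) (hφ j) x)) := by
            congr 1
            exact (LinearMap.congr_fun (hu_comm j (φ j) (hφ j)) x).symm
        _ = a (φ j) (τ (φ j)) hτ.le_apply (a j (φ j) (hφ j) x) :=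
            LinearMap.congr_fun (hh₁ (φ j) hτ.le_apply) _
        _ = a j (τ (φ j)) (hle j) x := (comp_a j (φ j) (τ (φ j)) (hφ j) hτ.le_apply (hle j) x).symm
end

section
/- (Comparison of the Frattini-iterated and ℓ-central filtrations, Remark 3.1.2, stated for finite ℓ-groups.) For every prime ℓ there exists a function τ : ℕ × ℕ → ℕ such that for every finite ℓ-group G generated by d elements and every n ≥ 1 one has F^{τ(d,n)}G ⊆ Φ^nG ⊆ F^nG, where F^• denotes the descending ℓ-central series of G and Φ^• the iterated Frattini-type series defined by Φ¹G = G and Φ^{n+1}G = the subgroup generated by the ℓ-th powers of elements of Φ^nG together with the commutators [x,y] for x, y ∈ Φ^nG. -/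
/-- One step of the descending `ℓ`-central series: the subgroup generated by the `ℓ`-th
powers of elements of `H` together with the commutators `[x, g] = x⁻¹g⁻¹xg` with `x ∈ H`
and `g ∈ G`. -/
def ellCentralStep (ℓ : ℕ) {G : Type*} [Group G] (H : Subgroup G) : Subgroup G :=
  Subgroup.closure
    ({y : G | ∃ x ∈ H, y = x ^ ℓ} ∪
     {y : G | ∃ x ∈ H, ∃ g : G, y = x⁻¹ * g⁻¹ * x * g})

/-- The descending `ℓ`-central series of `G`, numbered from `1`:
`F¹G = G` and `F^{n+1}G = (F^nG)^ℓ ⬝ (F^nG, G)`.  (The value at `0` is set to `⊤` by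
convention.) -/
def ellCentralSeries (ℓ : ℕ) (G : Type*) [Group G] : ℕ → Subgroup G
  | 0 => ⊤
  | 1 => ⊤
  | n + 2 => ellCentralStep ℓ (ellCentralSeries ℓ G (n + 1))

/-- One step of the iterated Frattini-type series: the subgroup generated by the `ℓ`-th
powers of elements of `H` together with the commutators `[x, y]` with `x, y ∈ H`. -/
def frattiniStep (ℓ : ℕ) {G : Type*} [Group G] (H : Subgroup G) : Subgroup G :=
  Subgroup.closure
    ({y : G | ∃ x ∈ H, y = x ^ ℓ} ∪
     {y : G | ∃ x ∈ H, ∃ g ∈ H, y = x⁻¹ * g⁻¹ * x * g})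

/-- The iterated Frattini-type series of `G`, numbered from `1`: `Φ¹G = G` and
`Φ^{n+1}G = (Φ^nG)^ℓ ⬝ (Φ^nG, Φ^nG)`.  (The value at `0` is set to `⊤` by convention.) -/
def frattiniSeries (ℓ : ℕ) (G : Type*) [Group G] : ℕ → Subgroup G
  | 0 => ⊤
  | 1 => ⊤
  | n + 2 => frattiniStep ℓ (frattiniSeries ℓ G (n + 1))

section Basic
variable {ℓ : ℕ} {G : Type*} [Group G]

theorem ellCentralStep_mono {H K : Subgroup G} (h : H ≤ K) :
    ellCentralStep ℓ H ≤ ellCentralStep ℓ K := by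
  apply Subgroup.closure_mono
  apply Set.union_subset_union
  · rintro y ⟨x, hx, rfl⟩; exact ⟨x, h hx, rfl⟩
  · rintro y ⟨x, hx, g, rfl⟩; exact ⟨x, h hx, g, rfl⟩

theorem frattiniStep_mono {H K : Subgroup G} (h : H ≤ K) :
    frattiniStep ℓ H ≤ frattiniStep ℓ K := by
  apply Subgroup.closure_mono
  apply Set.union_subset_union
  · rintro y ⟨x, hx, rfl⟩; exact ⟨x, h hx, rfl⟩
  · rintro y ⟨x, hx, g, hg, rfl⟩; exact ⟨x, h hx, g, h hg, rfl⟩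

theorem frattiniStep_le_ellCentralStep (H : Subgroup G) :
    frattiniStep ℓ H ≤ ellCentralStep ℓ H := by
  apply Subgroup.closure_mono
  apply Set.union_subset_union_right
  rintro y ⟨x, hx, g, _, rfl⟩; exact ⟨x, hx, g, rfl⟩

theorem frattiniStep_le (H : Subgroup G) : frattiniStep ℓ H ≤ H := by
  rw [frattiniStep, Subgroup.closure_le]
  rintro y (⟨x, hx, rfl⟩ | ⟨x, hx, g, hg, rfl⟩)
  · exact pow_mem hx ℓ
  · exact mul_mem (mul_mem (mul_mem (inv_mem hx) (inv_mem hg)) hx) hg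

theorem ellCentralStep_le {H : Subgroup G} (hH : H.Normal) : ellCentralStep ℓ H ≤ H := by
  rw [ellCentralStep, Subgroup.closure_le]
  rintro y (⟨x, hx, rfl⟩ | ⟨x, hx, g, rfl⟩)
  · exact pow_mem hx ℓ
  · have : g⁻¹ * x * g ∈ H := by simpa [mul_assoc] using hH.conj_mem x hx g⁻¹
    simpa [mul_assoc] using mul_mem (inv_mem hx) this

theorem closure_normal_of_conj {S : Set G} (h : ∀ g : G, ∀ s ∈ S, g * s * g⁻¹ ∈ S) :
    (Subgroup.closure S).Normal := by
  constructor
  intro x hx g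
  induction hx using Subgroup.closure_induction with
  | mem s hs => exact Subgroup.subset_closure (h g s hs)
  | one => simpa using Subgroup.one_mem _
  | mul a b _ _ ha hb =>
      have : g * (a * b) * g⁻¹ = (g * a * g⁻¹) * (g * b * g⁻¹) := by group
      rw [this]; exact mul_mem ha hb
  | inv a _ ha =>
      have : g * a⁻¹ * g⁻¹ = (g * a * g⁻¹)⁻¹ := by group
      rw [this]; exact inv_mem ha

theorem ellCentralStep_normal {H : Subgroup G} (hH : H.Normal) :
    (ellCentralStep ℓ H).Normal := by
  apply closure_normal_of_conj
  rintro g y (⟨x, hx, rfl⟩ | ⟨x, hx, k, rfl⟩)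
  · exact Or.inl ⟨g * x * g⁻¹, hH.conj_mem x hx g, by
      rw [conj_pow]⟩
  · refine Or.inr ⟨g * x * g⁻¹, hH.conj_mem x hx g, g * k * g⁻¹, ?_⟩
    group

theorem frattiniStep_normal {H : Subgroup G} (hH : H.Normal) :
    (frattiniStep ℓ H).Normal := by
  apply closure_normal_of_conj
  rintro g y (⟨x, hx, rfl⟩ | ⟨x, hx, k, hk, rfl⟩)
  · exact Or.inl ⟨g * x * g⁻¹, hH.conj_mem x hx g, by rw [conj_pow]⟩
  · refine Or.inr ⟨g * x * g⁻¹, hH.conj_mem x hx g, g * k * g⁻¹, hH.conj_mem k hk g, ?_⟩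
    group

theorem ellCentralSeries_normal (n : ℕ) : (ellCentralSeries ℓ G n).Normal := by
  induction n using Nat.strong_induction_on with
  | _ n ih =>
    match n with
    | 0 => show (⊤ : Subgroup G).Normal; infer_instance
    | 1 => show (⊤ : Subgroup G).Normal; infer_instance
    | n + 2 => exact ellCentralStep_normal (ih (n+1) (by omega))

theorem frattiniSeries_normal (n : ℕ) : (frattiniSeries ℓ G n).Normal := by
  induction n using Nat.strong_induction_on with
  | _ n ih =>
    match n with
    | 0 => show (⊤ : Subgroup G).Normal; infer_instance
    | 1 => show (⊤ : Subgroup G).Normal; infer_instance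
    | n + 2 => exact frattiniStep_normal (ih (n+1) (by omega))

theorem frattiniSeries_le_ellCentralSeries (n : ℕ) :
    frattiniSeries ℓ G n ≤ ellCentralSeries ℓ G n := by
  induction n using Nat.strong_induction_on with
  | _ n ih =>
    match n with
    | 0 => exact le_rfl
    | 1 => exact le_rfl
    | n + 2 =>
      exact (frattiniStep_le_ellCentralStep _).trans
        (ellCentralStep_mono (ih (n+1) (by omega)))

theorem ellCentralSeries_succ_le (n : ℕ) :
    ellCentralSeries ℓ G (n + 1) ≤ ellCentralSeries ℓ G n := by
  match n with
  | 0 => exact le_rfl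
  | 1 => exact ellCentralStep_le (ellCentralSeries_normal 1)
  | n + 2 => exact ellCentralStep_le (ellCentralSeries_normal (n+2))

theorem ellCentralSeries_antitone {m n : ℕ} (h : m ≤ n) :
    ellCentralSeries ℓ G n ≤ ellCentralSeries ℓ G m := by
  induction n with
  | zero => simp [Nat.le_zero.mp h]
  | succ n ih =>
    rcases Nat.lt_or_ge m (n+1) with h' | h'
    · exact (ellCentralSeries_succ_le n).trans (ih (by omega))
    · have : m = n + 1 := by omega
      subst this; exact le_rfl

theorem frattiniSeries_succ_le (n : ℕ) :
    frattiniSeries ℓ G (n + 1) ≤ frattiniSeries ℓ G n := by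
  match n with
  | 0 => exact le_rfl
  | 1 => exact frattiniStep_le _
  | n + 2 => exact frattiniStep_le _

end Basic

section MapDescent
variable {ℓ : ℕ} {G : Type*} [Group G]

theorem map_ellCentralStep_le {Q : Type*} [Group Q] (f : G →* Q) (H : Subgroup G) :
    (ellCentralStep ℓ H).map f ≤ ellCentralStep ℓ (H.map f) := by
  rw [ellCentralStep, MonoidHom.map_closure]
  apply Subgroup.closure_mono
  rintro y ⟨z, (⟨x, hx, rfl⟩ | ⟨x, hx, g, rfl⟩), rfl⟩
  · exact Or.inl ⟨f x, Subgroup.mem_map_of_mem f hx, by rw [map_pow]⟩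
  · exact Or.inr ⟨f x, Subgroup.mem_map_of_mem f hx, f g, by simp⟩

theorem map_ellCentralSeries_le {Q : Type*} [Group Q] (f : G →* Q) (n : ℕ) :
    (ellCentralSeries ℓ G n).map f ≤ ellCentralSeries ℓ Q n := by
  induction n using Nat.strong_induction_on with
  | _ n ih =>
    match n with
    | 0 => exact le_top
    | 1 => exact le_top
    | n + 2 =>
      exact (map_ellCentralStep_le f _).trans
        (ellCentralStep_mono (ih (n+1) (by omega)))

open scoped commutatorElement in
theorem eq_bot_of_ellCentralStep_eq [Finite G] (hℓ : ℓ.Prime) (hG : IsPGroup ℓ G)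
    {H : Subgroup G} (hH : H.Normal) (h : ellCentralStep ℓ H = H) : H = ⊥ := by
  haveI : Fact ℓ.Prime := ⟨hℓ⟩
  haveI := hH
  set C : Subgroup G := ⁅H, (⊤ : Subgroup G)⁆ with hC
  haveI : C.Normal := inferInstance
  set π := QuotientGroup.mk' C with hπ
  set A : Subgroup (G ⧸ C) := H.map π with hA
  -- A is generated by ℓ-th powers of its elements
  have key : A = Subgroup.closure {a : G ⧸ C | ∃ b ∈ A, a = b ^ ℓ} := by
    apply le_antisymm
    · conv_lhs => rw [hA, ← h]
      rw [ellCentralStep, MonoidHom.map_closure, Subgroup.closure_le]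
      rintro y ⟨z, (⟨x, hx, rfl⟩ | ⟨x, hx, g, rfl⟩), rfl⟩
      · exact Subgroup.subset_closure ⟨π x, Subgroup.mem_map_of_mem π hx, by rw [map_pow]⟩
      · have hz : x⁻¹ * g⁻¹ * x * g ∈ C := by
          have : ⁅x⁻¹, g⁻¹⁆ ∈ C :=
            Subgroup.commutator_mem_commutator (inv_mem hx) (Subgroup.mem_top g⁻¹)
          simpa [commutatorElement_def, mul_assoc] using this
        have : π (x⁻¹ * g⁻¹ * x * g) = 1 := (QuotientGroup.eq_one_iff _).mpr hz
        rw [this]; exact Subgroup.one_mem _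
    · rw [Subgroup.closure_le]
      rintro y ⟨b, hb, rfl⟩
      exact pow_mem hb ℓ
  -- A is trivial
  have hAbot : A = ⊥ := by
    by_contra hne
    have hcomm : ∀ a b : ↥A, a * b = b * a := by
      rintro ⟨a, ha⟩ ⟨b, hb⟩
      obtain ⟨x, hx, rfl⟩ := ha
      obtain ⟨y, hy, rfl⟩ := hb
      have : ⁅x, y⁆ ∈ C := Subgroup.commutator_mem_commutator hx (Subgroup.mem_top y)
      have h1 : ⁅π x, π y⁆ = 1 := by
        rw [← map_commutatorElement]
        exact (QuotientGroup.eq_one_iff _).mpr this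
      have := commutatorElement_eq_one_iff_commute.mp h1
      ext; exact this.eq
    letI : CommGroup ↥A := { (inferInstance : Group ↥A) with mul_comm := hcomm }
    let φ : ↥A →* ↥A := powMonoidHom ℓ
    have hsurj : Function.Surjective φ := by
      have hrange : (MonoidHom.range φ).map A.subtype = A := by
        apply le_antisymm
        · rintro y ⟨b, -, rfl⟩; exact b.2
        · conv_lhs => rw [key]
          rw [Subgroup.closure_le]
          rintro y ⟨b, hb, rfl⟩
          exact ⟨φ ⟨b, hb⟩, ⟨⟨b, hb⟩, rfl⟩, rfl⟩
      intro a
      have : (a : G ⧸ C) ∈ (MonoidHom.range φ).map A.subtype := by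
        rw [hrange]; exact a.2
      obtain ⟨b, ⟨c, rfl⟩, hb⟩ := this
      exact ⟨c, Subtype.ext hb⟩
    have hinj : Function.Injective φ := (Finite.injective_iff_surjective).mpr hsurj
    haveI : Nontrivial ↥A := (Subgroup.nontrivial_iff_ne_bot A).mpr hne
    haveI : Fintype ↥A := Fintype.ofFinite ↥A
    have hAp : IsPGroup ℓ ↥A := IsPGroup.to_subgroup (hG.to_quotient C) A
    obtain ⟨k, hk⟩ := (IsPGroup.iff_card).mp hAp
    rw [Nat.card_eq_fintype_card] at hk
    have hk0 : k ≠ 0 := by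
      intro h0
      rw [h0, pow_zero] at hk
      exact (Fintype.one_lt_card).ne' hk
    have hdvd : ℓ ∣ Fintype.card ↥A := by
      rw [hk]; exact dvd_pow_self ℓ hk0
    obtain ⟨a, ha⟩ := exists_prime_orderOf_dvd_card ℓ hdvd
    have : φ a = φ 1 := by
      show a ^ ℓ = (1 : ↥A) ^ ℓ
      rw [one_pow, ← ha, pow_orderOf_eq_one]
    have : a = 1 := hinj this
    rw [this, orderOf_one] at ha
    have := hℓ.one_lt
    omega
  have hHC : H ≤ C := by
    rw [Subgroup.map_eq_bot_iff] at hAbot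
    simpa [hπ, QuotientGroup.ker_mk'] using hAbot
  -- iterate into the lower central series
  have hlcs : ∀ k, H ≤ (⊤ : Subgroup G).lowerCentralSeries k := by
    intro k
    induction k with
    | zero => exact le_top
    | succ k ih =>
      calc H ≤ C := hHC
        _ ≤ ⁅(⊤ : Subgroup G).lowerCentralSeries k, (⊤ : Subgroup G)⁆ :=
            Subgroup.commutator_mono ih le_rfl
        _ = (⊤ : Subgroup G).lowerCentralSeries (k + 1) := (Subgroup.lowerCentralSeries_succ (S := ⊤) k).symm
  haveI := hG.isNilpotent
  obtain ⟨k, hk⟩ := (Subgroup.nilpotent_iff_lowerCentralSeries (G := G)).mp inferInstance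
  exact le_bot_iff.mp (hk ▸ hlcs k)

end MapDescent

section Length
variable {ℓ : ℕ} {G : Type*} [Group G]

theorem ellCentralSeries_eq_bot [Finite G] (hℓ : ℓ.Prime) {s : ℕ}
    (hcard : Nat.card G = ℓ ^ s) : ellCentralSeries ℓ G (s + 1) = ⊥ := by
  haveI : Fact ℓ.Prime := ⟨hℓ⟩
  have hG : IsPGroup ℓ G := IsPGroup.of_card hcard
  have main : ∀ k, ellCentralSeries ℓ G (k + 1) = ⊥ ∨
      Nat.card (ellCentralSeries ℓ G (k + 1)) * ℓ ^ k ≤ ℓ ^ s := by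
    intro k
    induction k with
    | zero =>
      right
      show Nat.card (⊤ : Subgroup G) * ℓ ^ 0 ≤ ℓ ^ s
      rw [Subgroup.card_top, hcard, pow_zero, mul_one]
    | succ k ih =>
      rcases ih with hbot | hle
      · left
        show ellCentralStep ℓ (ellCentralSeries ℓ G (k + 1)) = ⊥
        rw [hbot]
        exact le_bot_iff.mp (ellCentralStep_le (inferInstance : (⊥ : Subgroup G).Normal))
      · by_cases heq :
          ellCentralStep ℓ (ellCentralSeries ℓ G (k + 1)) = ellCentralSeries ℓ G (k + 1)
        · left
          show ellCentralStep ℓ (ellCentralSeries ℓ G (k + 1)) = ⊥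
          rw [heq]
          exact eq_bot_of_ellCentralStep_eq hℓ hG (ellCentralSeries_normal (k + 1)) heq
        · right
          have hle2 : ellCentralSeries ℓ G (k + 2) ≤ ellCentralSeries ℓ G (k + 1) :=
            ellCentralSeries_succ_le (k + 1)
          -- both cards are powers of ℓ
          obtain ⟨a, ha⟩ := (hG.to_subgroup (ellCentralSeries ℓ G (k + 2))).exists_card_eq
          obtain ⟨b, hb⟩ := (hG.to_subgroup (ellCentralSeries ℓ G (k + 1))).exists_card_eq
          have hdvd : Nat.card (ellCentralSeries ℓ G (k + 2)) ∣
              Nat.card (ellCentralSeries ℓ G (k + 1)) := Subgroup.card_dvd_of_le hle2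
          have hne : Nat.card (ellCentralSeries ℓ G (k + 2)) ≠
              Nat.card (ellCentralSeries ℓ G (k + 1)) := by
            intro hc
            exact heq (Subgroup.eq_of_le_of_card_ge hle2 hc.ge)
          have hab : a < b := by
            rw [ha, hb] at hdvd hne
            have := (Nat.pow_dvd_pow_iff_le_right hℓ.one_lt).mp hdvd
            rcases this.lt_or_eq with h | h
            · exact h
            · exact absurd (by rw [h]) hne
          have : Nat.card (ellCentralSeries ℓ G (k + 2)) * ℓ ≤
              Nat.card (ellCentralSeries ℓ G (k + 1)) := by
            rw [ha, hb, ← pow_succ]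
            exact Nat.pow_le_pow_right hℓ.one_lt.le hab
          calc Nat.card (ellCentralSeries ℓ G (k + 2)) * ℓ ^ (k + 1)
              = (Nat.card (ellCentralSeries ℓ G (k + 2)) * ℓ) * ℓ ^ k := by ring
            _ ≤ Nat.card (ellCentralSeries ℓ G (k + 1)) * ℓ ^ k :=
                Nat.mul_le_mul_right _ this
            _ ≤ ℓ ^ s := hle
  rcases main s with h | h
  · exact h
  · have hpos : 0 < ℓ ^ s := Nat.pow_pos (n := s) hℓ.pos
    have : Nat.card (ellCentralSeries ℓ G (s + 1)) ≤ 1 := by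
      by_contra hgt
      push_neg at hgt
      nlinarith
    have h1 : 0 < Nat.card (ellCentralSeries ℓ G (s + 1)) := Nat.card_pos
    exact Subgroup.card_eq_one.mp (by omega)

end Length

section Elementary
variable {ℓ : ℕ}

theorem frattiniStep_top_index_le {K : Type*} [Group K] [Fintype K] (hℓ : ℓ.Prime)
    (S : Finset K) (hS : Subgroup.closure (S : Set K) = ⊤) :
    (frattiniStep ℓ (⊤ : Subgroup K)).index ≤ ℓ ^ S.card := by
  classical
  haveI : Fact ℓ.Prime := ⟨hℓ⟩
  haveI : NeZero ℓ := ⟨hℓ.pos.ne'⟩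
  set N : Subgroup K := frattiniStep ℓ (⊤ : Subgroup K) with hN
  haveI hNn : N.Normal := frattiniStep_normal inferInstance
  set π := QuotientGroup.mk' N with hπ
  -- the quotient is commutative and of exponent ℓ
  have hcomm : ∀ a b : K ⧸ N, a * b = b * a := by
    intro a b
    obtain ⟨x, rfl⟩ := QuotientGroup.mk'_surjective N a
    obtain ⟨y, rfl⟩ := QuotientGroup.mk'_surjective N b
    have hxy : x⁻¹ * y⁻¹ * x * y ∈ N :=
      Subgroup.subset_closure (Or.inr ⟨x, trivial, y, trivial, rfl⟩)
    have h1 : (π x)⁻¹ * (π y)⁻¹ * π x * π y = 1 := by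
      rw [← map_inv, ← map_inv, ← map_mul, ← map_mul, ← map_mul]
      exact (QuotientGroup.eq_one_iff _).mpr hxy
    calc π x * π y = (π y * π x) * ((π x)⁻¹ * (π y)⁻¹ * π x * π y) := by group
      _ = π y * π x := by rw [h1, mul_one]
  have hpow : ∀ a : K ⧸ N, a ^ ℓ = 1 := by
    intro a
    obtain ⟨x, rfl⟩ := QuotientGroup.mk'_surjective N a
    have hx : x ^ ℓ ∈ N := Subgroup.subset_closure (Or.inl ⟨x, trivial, rfl⟩)
    rw [← map_pow]
    exact (QuotientGroup.eq_one_iff _).mpr hx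
  letI : CommGroup (K ⧸ N) := { (inferInstance : Group (K ⧸ N)) with mul_comm := hcomm }
  -- the surjection from (S → ZMod ℓ)
  set f : ({x // x ∈ S} → ZMod ℓ) → K ⧸ N :=
    fun e => ∏ s ∈ S.attach, (π s.1) ^ (e s).val with hf
  have hadd : ∀ e e', f (e + e') = f e * f e' := by
    intro e e'
    rw [hf]
    simp only
    rw [← Finset.prod_mul_distrib]
    apply Finset.prod_congr rfl
    intro s _
    rw [← pow_add, Pi.add_apply, ZMod.val_add]
    exact (pow_eq_pow_mod _ (hpow (π s.1))).symm
  have hzero : f 0 = 1 := by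
    rw [hf]
    simp [ZMod.val_zero]
  set R : Subgroup (K ⧸ N) :=
    { carrier := Set.range f
      one_mem' := ⟨0, hzero⟩
      mul_mem' := by rintro _ _ ⟨e, rfl⟩ ⟨e', rfl⟩; exact ⟨e + e', hadd e e'⟩
      inv_mem' := by
        rintro _ ⟨e, rfl⟩
        refine ⟨-e, ?_⟩
        rw [eq_comm, inv_eq_iff_mul_eq_one, eq_comm, ← hzero, ← hadd]
        simp } with hR
  have hRtop : R = ⊤ := by
    have h1 : Subgroup.closure (π '' (S : Set K)) = ⊤ := by
      rw [← MonoidHom.map_closure, hS]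
      exact Subgroup.map_top_of_surjective π (QuotientGroup.mk'_surjective N)
    rw [eq_top_iff, ← h1, Subgroup.closure_le]
    rintro _ ⟨s, hs, rfl⟩
    refine ⟨fun t => if t = ⟨s, hs⟩ then 1 else 0, ?_⟩
    rw [hf]
    simp only
    rw [Finset.prod_eq_single (⟨s, hs⟩ : {x // x ∈ S})]
    · simp [ZMod.val_one]
    · intro t _ ht
      simp [ht, ZMod.val_zero]
    · intro h
      exact absurd (Finset.mem_attach S _) h
  have hsurj : Function.Surjective f := by
    intro a
    have : a ∈ R := hRtop ▸ Subgroup.mem_top a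
    exact this
  have hcard : N.index ≤ Nat.card ({x // x ∈ S} → ZMod ℓ) := by
    rw [Subgroup.index_eq_card]
    exact Nat.card_le_card_of_surjective f hsurj
  calc N.index ≤ Nat.card ({x // x ∈ S} → ZMod ℓ) := hcard
    _ = ℓ ^ S.card := by
        rw [Nat.card_pi]
        simp [Nat.card_zmod, Finset.card_attach]

end Elementary

section Assembly
variable {ℓ : ℕ}

/-- Exponent bound for the index of the iterated Frattini series. -/
def tauAux (ℓ d : ℕ) : ℕ → ℕ
  | 0 => 0
  | 1 => 0
  | n + 2 => tauAux ℓ d (n + 1) + ℓ ^ (tauAux ℓ d (n + 1)) * d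

theorem frattiniStep_top_le_subgroupOf {G : Type*} [Group G] (H : Subgroup G) :
    frattiniStep ℓ (⊤ : Subgroup ↥H) ≤ (frattiniStep ℓ H).subgroupOf H := by
  rw [frattiniStep, Subgroup.closure_le]
  rintro y (⟨x, -, rfl⟩ | ⟨x, -, g, -, rfl⟩) <;> rw [SetLike.mem_coe, Subgroup.mem_subgroupOf]
  · exact Subgroup.subset_closure (Or.inl ⟨(x : G), x.2, by push_cast; rfl⟩)
  · exact Subgroup.subset_closure (Or.inr ⟨(x : G), x.2, (g : G), g.2, by push_cast; rfl⟩)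

theorem frattiniSeries_index_le {G : Type*} [Group G] [Fintype G] (hℓ : ℓ.Prime)
    {S : Finset G} (hS : Subgroup.closure (S : Set G) = ⊤) {d : ℕ} (hSd : S.card ≤ d) :
    ∀ n, (frattiniSeries ℓ G n).index ≤ ℓ ^ tauAux ℓ d n := by
  classical
  intro n
  induction n using Nat.strong_induction_on with
  | _ n ih =>
    match n with
    | 0 => simp [frattiniSeries, tauAux, Subgroup.index_top]
    | 1 => simp [frattiniSeries, tauAux, Subgroup.index_top]
    | n + 2 =>
      set H := frattiniSeries ℓ G (n + 1) with hH
      have ihH : H.index ≤ ℓ ^ tauAux ℓ d (n + 1) := ih (n + 1) (by omega)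
      obtain ⟨T, hTcard, hTgen⟩ := Subgroup.exists_finset_card_le_mul H hS
      have h13 : (frattiniStep ℓ (⊤ : Subgroup ↥H)).index ≤ ℓ ^ T.card :=
        frattiniStep_top_index_le hℓ T hTgen
      have hrel : (frattiniSeries ℓ G (n + 2)).relIndex H ≤
          (frattiniStep ℓ (⊤ : Subgroup ↥H)).index := by
        apply Nat.le_of_dvd
        · exact Nat.pos_of_ne_zero (Subgroup.FiniteIndex.index_ne_zero)
        · exact Subgroup.index_dvd_of_le (frattiniStep_top_le_subgroupOf H)
      have hle : frattiniSeries ℓ G (n + 2) ≤ H := frattiniStep_le _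
      have hmul : (frattiniSeries ℓ G (n + 2)).relIndex H * H.index =
          (frattiniSeries ℓ G (n + 2)).index := Subgroup.relIndex_mul_index hle
      have hTd : T.card ≤ ℓ ^ tauAux ℓ d (n + 1) * d :=
        hTcard.trans (Nat.mul_le_mul ihH hSd)
      calc (frattiniSeries ℓ G (n + 2)).index
          = (frattiniSeries ℓ G (n + 2)).relIndex H * H.index := hmul.symm
        _ ≤ ℓ ^ T.card * ℓ ^ tauAux ℓ d (n + 1) :=
            Nat.mul_le_mul (hrel.trans h13) ihH
        _ ≤ ℓ ^ (ℓ ^ tauAux ℓ d (n + 1) * d) * ℓ ^ tauAux ℓ d (n + 1) :=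
            Nat.mul_le_mul_right _ (Nat.pow_le_pow_right hℓ.pos hTd)
        _ = ℓ ^ tauAux ℓ d (n + 2) := by rw [← pow_add, tauAux]; ring_nf


/-- Remark 3.1.2 (for finite `ℓ`-groups): the iterated Frattini filtration and the
descending `ℓ`-central filtration are equivalent, i.e. there is a function `τ` with
`F^{τ(d,n)} G ⊆ Φ^n G ⊆ F^n G` for every finite `ℓ`-group `G` generated by `d` elements
and every `n ≥ 1`. -/
theorem stmt7 {ℓ : ℕ} (hℓ : ℓ.Prime) :
    ∃ τ : ℕ × ℕ → ℕ,
      ∀ (G : Type*) [Group G] [Fintype G],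
        (∃ s, Fintype.card G = ℓ ^ s) →
        ∀ d : ℕ, (∃ S : Finset G, S.card ≤ d ∧ Subgroup.closure (S : Set G) = ⊤) →
        ∀ n : ℕ, 1 ≤ n →
          ellCentralSeries ℓ G (τ (d, n)) ≤ frattiniSeries ℓ G n ∧
          frattiniSeries ℓ G n ≤ ellCentralSeries ℓ G n := by
  haveI : Fact ℓ.Prime := ⟨hℓ⟩
  refine ⟨fun p => tauAux ℓ p.1 p.2 + 1, ?_⟩
  rintro G _ _ ⟨s, hs⟩ d ⟨S, hSd, hSgen⟩ n -
  refine ⟨?_, frattiniSeries_le_ellCentralSeries n⟩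
  set b := tauAux ℓ d n with hb
  set N := frattiniSeries ℓ G n with hN
  haveI : N.Normal := frattiniSeries_normal n
  have hGp : IsPGroup ℓ G := IsPGroup.of_card (by rw [Nat.card_eq_fintype_card, hs])
  have hidx : N.index ≤ ℓ ^ b := frattiniSeries_index_le hℓ hSgen hSd n
  obtain ⟨e, he⟩ := (hGp.to_quotient N).exists_card_eq
  have heb : e ≤ b := by
    have : ℓ ^ e ≤ ℓ ^ b := by
      rw [← he, ← Subgroup.index_eq_card]
      exact hidx
    exact (Nat.pow_le_pow_iff_right hℓ.one_lt).mp this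
  have hbot : ellCentralSeries ℓ (G ⧸ N) (e + 1) = ⊥ := ellCentralSeries_eq_bot hℓ he
  have hmap : (ellCentralSeries ℓ G (b + 1)).map (QuotientGroup.mk' N) ≤ ⊥ := by
    calc (ellCentralSeries ℓ G (b + 1)).map (QuotientGroup.mk' N)
        ≤ ellCentralSeries ℓ (G ⧸ N) (b + 1) := map_ellCentralSeries_le _ _
      _ ≤ ellCentralSeries ℓ (G ⧸ N) (e + 1) := ellCentralSeries_antitone (by omega)
      _ = ⊥ := hbot
  have : ellCentralSeries ℓ G (b + 1) ≤ (QuotientGroup.mk' N).ker :=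
    (Subgroup.map_eq_bot_iff _).mp (le_bot_iff.mp hmap)
  rwa [QuotientGroup.ker_mk'] at this


end Assembly
end

section
/- (Lemma 13.6.1.) Let A be a commutative ring and B a commutative A-algebra generated as an A-module by the elements 1, x₁, …, x_n. Suppose that the module of syzygies N = {(c₀,…,c_n) ∈ A^{n+1} : c₀ + c₁x₁ + ⋯ + c_nx_n = 0 in B} is generated as an A-module by y₁, …, y_m. Let Φ : A[T₁,…,T_n] → B be the A-algebra homomorphism sending each T_i to x_i, and let J = ker Φ. Identify each (c₀,…,c_n) ∈ A^{n+1} with the polynomial c₀ + c₁T₁ + ⋯ + c_nT_n of degree at most 1; in particular each y_i gives an element of J. For each pair 1 ≤ i, j ≤ n choose elements b_u^{(i,j)} ∈ A (0 ≤ u ≤ n) such that x_i x_j = b₀^{(i,j)} + b₁^{(i,j)}x₁ + ⋯ + b_n^{(i,j)}x_n, and set q_{i,j} = b₀^{(i,j)} + b₁^{(i,j)}T₁ + ⋯ + b_n^{(i,j)}T_n − T_iT_j ∈ J. Then J is generated, as an ideal of A[T₁,…,T_n], by y₁,…,y_m together with the q_{i,j} for 1 ≤ i, j ≤ n. -/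
open MvPolynomial

/-- Lemma 13.6.1: let `B` be a commutative `A`-algebra generated as an `A`-module by
`1, x₁, …, xₙ`, whose module of syzygies is generated by `y₁, …, y_m`.  Then the kernel
of the evaluation map `A[T₁,…,Tₙ] → B`, `Tᵢ ↦ xᵢ`, is generated as an ideal by the
degree-one polynomials corresponding to the `yᵢ` together with the quadratic relations
`q_{i,j} = b₀^{(i,j)} + ∑ᵤ bᵤ^{(i,j)} Tᵤ − TᵢTⱼ` expressing the products `xᵢxⱼ`. -/
theorem stmt8 {A B : Type*} [CommRing A] [CommRing B] [Algebra A B]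
    (n m : ℕ) (x : Fin n → B)
    (hgen : Submodule.span A ({1} ∪ Set.range x) = (⊤ : Submodule A B))
    (y : Fin m → (Fin (n + 1) → A))
    (hsyz : ∀ c : Fin (n + 1) → A,
      (algebraMap A B (c 0) + ∑ i : Fin n, c i.succ • x i = 0) ↔
        c ∈ Submodule.span A (Set.range y))
    (b : Fin n → Fin n → Fin (n + 1) → A)
    (hb : ∀ i j, x i * x j =
      algebraMap A B (b i j 0) + ∑ u : Fin n, b i j u.succ • x u) :
    RingHom.ker (MvPolynomial.aeval x : MvPolynomial (Fin n) A →ₐ[A] B) =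
      Ideal.span
        ((Set.range fun i : Fin m =>
            (C (y i 0) + ∑ j : Fin n, C (y i j.succ) * X j :
              MvPolynomial (Fin n) A)) ∪
         (Set.range fun p : Fin n × Fin n =>
            (C (b p.1 p.2 0) + ∑ u : Fin n, C (b p.1 p.2 u.succ) * X u
              - X p.1 * X p.2 : MvPolynomial (Fin n) A))) := by
  classical
  set S : Set (MvPolynomial (Fin n) A) :=
      ((Set.range fun i : Fin m =>
            (C (y i 0) + ∑ j : Fin n, C (y i j.succ) * X j :
              MvPolynomial (Fin n) A)) ∪
         (Set.range fun p : Fin n × Fin n =>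
            (C (b p.1 p.2 0) + ∑ u : Fin n, C (b p.1 p.2 u.succ) * X u
              - X p.1 * X p.2 : MvPolynomial (Fin n) A))) with hS
  -- the linear map sending a coefficient vector to its degree-one polynomial
  set P : Fin (n + 1) → MvPolynomial (Fin n) A := Fin.cons 1 X with hP
  set L : (Fin (n + 1) → A) →ₗ[A] MvPolynomial (Fin n) A :=
    { toFun := fun c => ∑ u : Fin (n + 1), c u • P u
      map_add' := by intro c d; simp [add_smul, Finset.sum_add_distrib]
      map_smul' := by intro a c; simp [mul_smul, Finset.smul_sum] } with hLdef
  have hLc : ∀ c : Fin (n + 1) → A,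
      L c = C (c 0) + ∑ j : Fin n, C (c j.succ) * X j := by
    intro c
    simp [hLdef, hP, Fin.sum_univ_succ, smul_eq_C_mul, Algebra.smul_def,
      algebraMap_eq, mul_one]
  have hLsingle : ∀ u : Fin (n + 1),
      L (Pi.single u 1) = P u := by
    intro u
    simp [hLdef, Pi.single_apply, Finset.sum_ite_eq']
  -- evaluation of degree-one polynomials
  have haevalL : ∀ c : Fin (n + 1) → A,
      aeval x (L c) = algebraMap A B (c 0) + ∑ i : Fin n, c i.succ • x i := by
    intro c
    simp [hLc, Algebra.smul_def]
  -- every element of S lies in the kernel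
  have hker : Ideal.span S ≤
      RingHom.ker (MvPolynomial.aeval x : MvPolynomial (Fin n) A →ₐ[A] B) := by
    rw [Ideal.span_le]
    rintro p hp
    simp only [SetLike.mem_coe, RingHom.mem_ker]
    rcases hp with ⟨i, rfl⟩ | ⟨⟨i, j⟩, rfl⟩
    · have h1 := (hsyz (y i)).mpr (Submodule.subset_span ⟨i, rfl⟩)
      have h2 := haevalL (y i)
      rw [hLc] at h2
      rw [h2, h1]
    · have h2 := haevalL (b i j)
      rw [hLc] at h2
      rw [map_sub, h2, map_mul, aeval_X, aeval_X, ← hb i j, sub_self]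
  -- the quadratic relations
  have hq : ∀ i j : Fin n,
      L (b i j) - X i * X j ∈ Ideal.span S := by
    intro i j
    refine Ideal.subset_span (Or.inr ⟨(i, j), ?_⟩)
    rw [hLc]
  -- the submodule generated by the span of S and degree-one polys is everything
  set M : Submodule A (MvPolynomial (Fin n) A) :=
    (Ideal.span S).restrictScalars A ⊔ LinearMap.range L with hM
  have hmul : ∀ (i : Fin n) (g : MvPolynomial (Fin n) A), g ∈ M → X i * g ∈ M := by
    intro i g hg
    rw [hM, Submodule.mem_sup] at hg
    obtain ⟨h, hh, g', ⟨c, rfl⟩, rfl⟩ := hg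
    rw [mul_add]
    refine Submodule.add_mem _ (Submodule.mem_sup_left (Ideal.mul_mem_left _ _ hh)) ?_
    have key : X i * L c =
        L (c 0 • (Pi.single i.succ 1 : Fin (n + 1) → A) + ∑ j : Fin n, c j.succ • b i j)
          - ∑ j : Fin n, c j.succ • (L (b i j) - X i * X j) := by
      rw [map_add, map_smul, map_sum, hLsingle]
      simp only [Fin.cons_succ, map_smul, smul_sub, Finset.sum_sub_distrib]
      have hexp : X i * L c =
          c 0 • X i + ∑ j : Fin n, c j.succ • (X i * X j) := by
        rw [hLc, mul_add, Finset.mul_sum]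
        simp only [smul_eq_C_mul]
        congr 1
        · ring
        · exact Finset.sum_congr rfl fun j _ => by ring
      rw [hexp]
      simp only [hP, Fin.cons_succ]
      abel
    rw [key]
    refine Submodule.sub_mem _ (Submodule.mem_sup_right (LinearMap.mem_range_self _ _)) ?_
    refine Submodule.mem_sup_left ?_
    exact Submodule.sum_mem _ fun j _ => Submodule.smul_mem _ _ (hq i j)
  have htop : ∀ f : MvPolynomial (Fin n) A, f ∈ M := by
    intro f
    induction f using MvPolynomial.induction_on with
    | C a =>
      refine Submodule.mem_sup_right ⟨a • (Pi.single 0 1 : Fin (n + 1) → A), ?_⟩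
      rw [map_smul, hLsingle]
      simp [hP, smul_eq_C_mul]
    | add p q hp hq => exact Submodule.add_mem _ hp hq
    | mul_X p i hp => rw [mul_comm]; exact hmul i p hp
  -- main proof
  refine le_antisymm ?_ hker
  intro f hf
  obtain ⟨h, hh, g', ⟨c, rfl⟩, rfl⟩ := Submodule.mem_sup.mp ((hM ▸ htop f))
  have hhk : aeval x h = 0 := hker hh
  have hLk : aeval x (L c) = 0 := by
    have : aeval x (h + L c) = 0 := hf
    rw [map_add, hhk, zero_add] at this
    exact this
  rw [haevalL] at hLk
  have hcy : c ∈ Submodule.span A (Set.range y) := (hsyz c).mp hLk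
  have hLcS : L c ∈ Ideal.span S := by
    have h1 : L c ∈ Submodule.map L (Submodule.span A (Set.range y)) :=
      Submodule.mem_map_of_mem hcy
    rw [Submodule.map_span] at h1
    have h2 : Submodule.span A (L '' Set.range y) ≤
        (Ideal.span S).restrictScalars A := by
      rw [Submodule.span_le]
      rintro _ ⟨_, ⟨i, rfl⟩, rfl⟩
      refine Ideal.subset_span (Or.inl ⟨i, ?_⟩)
      rw [hLc]
    exact h2 h1
  exact Ideal.add_mem _ hh hLcS
end

section
/- (Lemma 14.3.) Let φ : A → B be a homomorphism of commutative rings. For f ∈ A, let A[1/f] denote the localization of A away from f (inverting the powers of f), let B[1/f] denote the localization of B away from φ(f), and let φ_f : A[1/f] → B[1/f] be the induced ring homomorphism. Then each of the following three subsets of A is an ideal of A: the set of f such that φ_f is injective; the set of f such that φ_f is surjective; and the set of f such that φ_f is bijective. -/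
open IsLocalization

section span
variable {R S : Type*} [CommRing R] [CommRing S]

lemma inj_of_span (ψ : R →+* S) (s : Set R) (e : Ideal.span s = ⊤)
    (H : ∀ r : s, Function.Injective (Localization.awayMap ψ r)) : Function.Injective ψ := by
  rw [injective_iff_map_eq_zero]
  intro x hx
  have : x ∈ (⊥ : Submodule R R) := by
    apply Submodule.mem_of_span_eq_top_of_smul_pow_mem (⊥ : Submodule R R) s e
    intro r
    have h1 : algebraMap R (Localization.Away (r : R)) x = 0 := by
      apply H r
      simp only [Localization.awayMap, IsLocalization.Away.map, IsLocalization.map_eq, hx,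
        map_zero]
    obtain ⟨⟨_, n, rfl⟩, hm⟩ :=
      (IsLocalization.map_eq_zero_iff (Submonoid.powers (r : R)) _ _).mp h1
    exact ⟨n, by simpa using hm⟩
  simpa using this

lemma surj_of_span (ψ : R →+* S) (s : Set R) (e : Ideal.span s = ⊤)
    (H : ∀ r : s, Function.Surjective (Localization.awayMap ψ r)) : Function.Surjective ψ := by
  rw [← Set.range_eq_univ, Set.eq_univ_iff_forall]
  letI := ψ.toAlgebra
  intro x
  apply Submodule.mem_of_span_eq_top_of_smul_pow_mem
    (LinearMap.range (Algebra.linearMap R S)) s e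
  intro r
  obtain ⟨a, e'⟩ := H r (algebraMap _ _ x)
  obtain ⟨b, ⟨_, n, rfl⟩, rfl⟩ := IsLocalization.mk'_surjective (Submonoid.powers (r : R)) a
  erw [IsLocalization.map_mk'] at e'
  rw [eq_comm, IsLocalization.eq_mk'_iff_mul_eq] at e'
  simp only [Subtype.coe_mk, ← map_mul] at e'
  obtain ⟨⟨_, n', rfl⟩, e''⟩ := (IsLocalization.eq_iff_exists (Submonoid.powers (ψ r)) _).mp e'
  dsimp only at e''
  obtain ⟨n, hn⟩ := b.2.2
  dsimp only at hn
  rw [← hn, mul_comm x, ← mul_assoc, ← map_pow, ← map_mul, ← map_mul, ← pow_add] at e''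
  exact ⟨n' + n, _, e''.symm⟩

end span

section aux
variable {A B : Type*} [CommRing A] [CommRing B] (φ : A →+* B)

/-- Model transfer for injectivity. -/
lemma core_inj (r : A) (A₁ B₁ : Type*) [CommRing A₁] [CommRing B₁] [Algebra A A₁] [Algebra B B₁]
    [IsLocalization.Away r A₁] [IsLocalization.Away (φ r) B₁] :
    Function.Injective (IsLocalization.Away.map A₁ B₁ φ r) ↔
      Function.Injective (Localization.awayMap φ r) := by
  have h : IsLocalization.Away.map A₁ B₁ φ r =
      ((IsLocalization.algEquiv (Submonoid.powers (φ r)) (Localization.Away (φ r)) B₁).toRingEquiv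
        : Localization.Away (φ r) →+* B₁).comp
        ((Localization.awayMap φ r).comp
          ((IsLocalization.algEquiv (Submonoid.powers r) A₁ (Localization.Away r)).toRingEquiv
            : A₁ →+* Localization.Away r)) := by
    apply IsLocalization.ringHom_ext (Submonoid.powers r)
    ext x
    simp [IsLocalization.Away.map, IsLocalization.map_eq]
  rw [h]
  simp only [RingHom.coe_comp, RingHom.coe_coe]
  rw [Function.Injective.of_comp_iff (EquivLike.injective _),
    Function.Injective.of_comp_iff']
  exact AlgEquiv.bijective _

lemma core_surj (r : A) (A₁ B₁ : Type*) [CommRing A₁] [CommRing B₁] [Algebra A A₁] [Algebra B B₁]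
    [IsLocalization.Away r A₁] [IsLocalization.Away (φ r) B₁] :
    Function.Surjective (IsLocalization.Away.map A₁ B₁ φ r) ↔
      Function.Surjective (Localization.awayMap φ r) := by
  have h : IsLocalization.Away.map A₁ B₁ φ r =
      ((IsLocalization.algEquiv (Submonoid.powers (φ r)) (Localization.Away (φ r)) B₁).toRingEquiv
        : Localization.Away (φ r) →+* B₁).comp
        ((Localization.awayMap φ r).comp
          ((IsLocalization.algEquiv (Submonoid.powers r) A₁ (Localization.Away r)).toRingEquiv
            : A₁ →+* Localization.Away r)) := by
    apply IsLocalization.ringHom_ext (Submonoid.powers r)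
    ext x
    simp [IsLocalization.Away.map, IsLocalization.map_eq]
  rw [h]
  simp only [RingHom.coe_comp, RingHom.coe_coe]
  rw [← Function.comp_assoc,
    Function.Surjective.of_comp_iff _
      (EquivLike.surjective ((algEquiv (Submonoid.powers r) A₁ (Localization.Away r)).toRingEquiv)),
    Function.Surjective.of_comp_iff'
      (EquivLike.bijective
        ((algEquiv (Submonoid.powers (φ r)) (Localization.Away (φ r)) B₁).toRingEquiv))]

lemma instB (f h : A) : IsLocalization.Away (φ (f * h))
    (Localization.Away ((Localization.awayMap φ h) (algebraMap A (Localization.Away h) f))) := by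
  have hc : (Localization.awayMap φ h) (algebraMap A (Localization.Away h) f)
      = algebraMap B (Localization.Away (φ h)) (φ f) := IsLocalization.map_eq _ _
  rw [hc, map_mul]
  infer_instance

lemma ext_lemma (f h : A) :
    letI := instB φ f h
    IsLocalization.Away.map
        (Localization.Away (algebraMap A (Localization.Away h) f))
        (Localization.Away ((Localization.awayMap φ h) (algebraMap A (Localization.Away h) f)))
        φ (f * h)
      = Localization.awayMap (Localization.awayMap φ h)
          (algebraMap A (Localization.Away h) f) := by
  letI := instB φ f h
  apply IsLocalization.ringHom_ext (Submonoid.powers (f * h))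
  ext x
  simp only [RingHom.coe_comp, Function.comp_apply, IsLocalization.Away.map]
  simp only [IsLocalization.map_eq]
  rw [IsScalarTower.algebraMap_apply A (Localization.Away h)
      (Localization.Away (algebraMap A (Localization.Away h) f))]
  simp only [IsLocalization.map_eq]
  rw [← IsScalarTower.algebraMap_apply B (Localization.Away (φ h))]

lemma smul_inj (a f : A) (hf : Function.Injective (Localization.awayMap φ f)) :
    Function.Injective (Localization.awayMap φ (a * f)) := by
  letI := instB φ a f
  have h3 : Function.Injective (Localization.awayMap (Localization.awayMap φ f)
      (algebraMap A (Localization.Away f) a)) :=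
    IsLocalization.map_injective_of_injective _ _ _ hf
  rw [← ext_lemma φ a f] at h3
  exact (core_inj φ (a * f) _ _).mp h3

lemma smul_surj (a f : A) (hf : Function.Surjective (Localization.awayMap φ f)) :
    Function.Surjective (Localization.awayMap φ (a * f)) := by
  letI := instB φ a f
  have h3 : Function.Surjective (Localization.awayMap (Localization.awayMap φ f)
      (algebraMap A (Localization.Away f) a)) :=
    IsLocalization.map_surjective_of_surjective _ _ _ hf
  rw [← ext_lemma φ a f] at h3
  exact (core_surj φ (a * f) _ _).mp h3

/-- induced map on the localization of `Away h` at the image of `f`. -/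
lemma step_inj (f h : A) (hf : Function.Injective (Localization.awayMap φ f)) :
    Function.Injective (Localization.awayMap (Localization.awayMap φ h)
      (algebraMap A (Localization.Away h) f)) := by
  letI := instB φ f h
  rw [← ext_lemma φ f h]
  have h2 : Function.Injective (Localization.awayMap φ (f * h)) := by
    have := smul_inj φ h f hf
    rwa [mul_comm] at this
  exact (core_inj φ (f * h) _ _).mpr h2

lemma step_surj (f h : A) (hf : Function.Surjective (Localization.awayMap φ f)) :
    Function.Surjective (Localization.awayMap (Localization.awayMap φ h)
      (algebraMap A (Localization.Away h) f)) := by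
  letI := instB φ f h
  rw [← ext_lemma φ f h]
  have h2 : Function.Surjective (Localization.awayMap φ (f * h)) := by
    have := smul_surj φ h f hf
    rwa [mul_comm] at this
  exact (core_surj φ (f * h) _ _).mpr h2

lemma span_cd (f g : A) :
    Ideal.span ({algebraMap A (Localization.Away (f + g)) f,
      algebraMap A (Localization.Away (f + g)) g} : Set (Localization.Away (f + g))) = ⊤ := by
  have hmem : algebraMap A (Localization.Away (f + g)) (f + g) ∈
      Ideal.span ({algebraMap A (Localization.Away (f + g)) f,
        algebraMap A (Localization.Away (f + g)) g} : Set (Localization.Away (f + g))) := by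
    rw [map_add]
    exact Ideal.add_mem _ (Ideal.subset_span (by simp)) (Ideal.subset_span (by simp))
  exact Ideal.eq_top_of_isUnit_mem _ hmem (IsLocalization.Away.algebraMap_isUnit (f + g))

lemma add_inj (f g : A) (hf : Function.Injective (Localization.awayMap φ f))
    (hg : Function.Injective (Localization.awayMap φ g)) :
    Function.Injective (Localization.awayMap φ (f + g)) := by
  apply inj_of_span _ _ (span_cd f g)
  rintro ⟨r, hr | hr⟩ <;> subst hr
  · exact step_inj φ f (f + g) hf
  · exact step_inj φ g (f + g) hg

lemma add_surj (f g : A) (hf : Function.Surjective (Localization.awayMap φ f))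
    (hg : Function.Surjective (Localization.awayMap φ g)) :
    Function.Surjective (Localization.awayMap φ (f + g)) := by
  apply surj_of_span _ _ (span_cd f g)
  rintro ⟨r, hr | hr⟩ <;> subst hr
  · exact step_surj φ f (f + g) hf
  · exact step_surj φ g (f + g) hg

lemma zero_bij : Function.Bijective (Localization.awayMap φ (0 : A)) := by
  have h1 : Subsingleton (Localization.Away (0 : A)) :=
    IsLocalization.subsingleton (M := Submonoid.powers (0 : A)) ⟨1, pow_one 0⟩
  have h2 : Subsingleton (Localization.Away (φ 0)) := by
    rw [map_zero]
    exact IsLocalization.subsingleton (M := Submonoid.powers (0 : B)) ⟨1, pow_one 0⟩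
  exact ⟨Function.injective_of_subsingleton _, fun y => ⟨0, Subsingleton.elim _ _⟩⟩

noncomputable def injIdeal : Ideal A where
  carrier := {f | Function.Injective (Localization.awayMap φ f)}
  zero_mem' := (zero_bij φ).1
  add_mem' := fun hf hg => add_inj φ _ _ hf hg
  smul_mem' := fun a f hf => by
    simpa [smul_eq_mul] using smul_inj φ a f hf

noncomputable def surjIdeal : Ideal A where
  carrier := {f | Function.Surjective (Localization.awayMap φ f)}
  zero_mem' := (zero_bij φ).2
  add_mem' := fun hf hg => add_surj φ _ _ hf hg
  smul_mem' := fun a f hf => by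
    simpa [smul_eq_mul] using smul_surj φ a f hf

end aux

/-- Lemma 14.3: for a homomorphism `φ : A → B` of commutative rings, the set of `f ∈ A`
such that the induced map `A[1/f] → B[1/φ(f)]` between the localizations away from `f`
and away from `φ f` is injective (resp. surjective, resp. bijective) is an ideal of `A`. -/
theorem stmt9 {A B : Type*} [CommRing A] [CommRing B] (φ : A →+* B) :
    (∃ I : Ideal A, ∀ f : A,
        f ∈ I ↔ Function.Injective (Localization.awayMap φ f)) ∧
    (∃ I : Ideal A, ∀ f : A,
        f ∈ I ↔ Function.Surjective (Localization.awayMap φ f)) ∧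
    (∃ I : Ideal A, ∀ f : A,
        f ∈ I ↔ Function.Bijective (Localization.awayMap φ f)) := by
  refine ⟨⟨injIdeal φ, fun f => Iff.rfl⟩, ⟨surjIdeal φ, fun f => Iff.rfl⟩,
    ⟨injIdeal φ ⊓ surjIdeal φ, fun f => ?_⟩⟩
  constructor
  · rintro ⟨h1, h2⟩; exact ⟨h1, h2⟩
  · rintro ⟨h1, h2⟩; exact ⟨h1, h2⟩
end

section
/- (Lemma 14.5, open-immersion criterion.) Let φ : A → B be a homomorphism of commutative rings, and let P be an ideal of A whose elements are exactly those f ∈ A such that the induced homomorphism A[1/f] → B[1/φ(f)] between the localizations away from f and away from φ(f) is bijective (such an ideal exists by Lemma 14.3). Then the morphism of affine schemes Spec B → Spec A induced by φ is an open immersion if and only if the ideal generated by φ(P) in B is the unit ideal of B. -/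
open AlgebraicGeometry CategoryTheory Topology

universe u

namespace Stmt10Aux

variable {A B : Type u} [CommRing A] [CommRing B] (φ : A →+* B) (f : A)

noncomputable def jA : Spec (CommRingCat.of (Localization.Away f)) ⟶ Spec (CommRingCat.of A) :=
  Spec.map (CommRingCat.ofHom (algebraMap A (Localization.Away f)))

noncomputable def jB :
    Spec (CommRingCat.of (Localization.Away (φ f))) ⟶ Spec (CommRingCat.of B) :=
  Spec.map (CommRingCat.ofHom (algebraMap B (Localization.Away (φ f))))

noncomputable def hh :
    Spec (CommRingCat.of (Localization.Away (φ f))) ⟶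
      Spec (CommRingCat.of (Localization.Away f)) :=
  Spec.map (CommRingCat.ofHom (Localization.awayMap φ f))

instance : IsOpenImmersion (jA f) := by
  unfold jA; infer_instance

instance : IsOpenImmersion (jB φ f) := by
  unfold jB; infer_instance

lemma ring_sq :
    (Localization.awayMap φ f).comp (algebraMap A (Localization.Away f)) =
      (algebraMap B (Localization.Away (φ f))).comp φ := by
  exact IsLocalization.map_comp _

lemma sqSpec : jB φ f ≫ Spec.map (CommRingCat.ofHom φ) = hh φ f ≫ jA f := by
  rw [jA, jB, hh, ← Spec.map_comp, ← Spec.map_comp]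
  congr 1
  rw [← CommRingCat.ofHom_comp, ← CommRingCat.ofHom_comp, ring_sq]

lemma range_jA : Set.range (jA f).base = (PrimeSpectrum.basicOpen f : Set (PrimeSpectrum A)) :=
  PrimeSpectrum.localization_away_comap_range (Localization.Away f) f

lemma range_jB : Set.range (jB φ f).base = (PrimeSpectrum.basicOpen (φ f) : Set (PrimeSpectrum B)) :=
  PrimeSpectrum.localization_away_comap_range (Localization.Away (φ f)) (φ f)

lemma base_mem_basicOpen (x : PrimeSpectrum B) :
    (Spec.map (CommRingCat.ofHom φ)).base x ∈ PrimeSpectrum.basicOpen f ↔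
      φ f ∉ x.asIdeal := by
  rfl

end Stmt10Aux

open Stmt10Aux

/-- Lemma 14.5 (open-immersion criterion): let `φ : A → B` be a homomorphism of
commutative rings and `P` the ideal of those `f ∈ A` such that the induced map
`A[1/f] → B[1/φ(f)]` is bijective.  Then `Spec B → Spec A` is an open immersion if and
only if the ideal generated by `φ(P)` in `B` is the unit ideal. -/
theorem stmt10 {A B : Type u} [CommRing A] [CommRing B] (φ : A →+* B)
    (P : Ideal A)
    (hP : ∀ f : A, f ∈ P ↔ Function.Bijective (Localization.awayMap φ f)) :
    IsOpenImmersion (Spec.map (CommRingCat.ofHom φ)) ↔ Ideal.map φ P = ⊤ := by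
  set g := Spec.map (CommRingCat.ofHom φ) with hg
  constructor
  · intro H
    by_contra hne
    obtain ⟨q, hqmax, hq⟩ := Ideal.exists_le_maximal _ hne
    set x : PrimeSpectrum B := ⟨q, hqmax.isPrime⟩ with hx
    set p : PrimeSpectrum A := g.base x with hp
    have hopen : IsOpen (Set.range g.base) := g.isOpenEmbedding.isOpen_range
    have hpmem : p ∈ Set.range g.base := ⟨x, rfl⟩
    obtain ⟨_, ⟨_, ⟨f, rfl⟩, rfl⟩, hpf, hsub⟩ :=
      PrimeSpectrum.isBasis_basic_opens.exists_subset_of_mem_open hpmem hopen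
    -- claim : f ∈ P
    have hoi : IsOpenImmersion (hh φ f ≫ jA f) := by
      rw [← sqSpec]; infer_instance
    haveI := hoi
    have hoi2 : IsOpenImmersion (hh φ f) := IsOpenImmersion.of_comp (hh φ f) (jA f)
    have hsurj : Function.Surjective (hh φ f).base := by
      intro y
      have h1 : (jA f).base y ∈ Set.range g.base := by
        apply hsub
        have hy : (jA f).base y ∈ Set.range (jA f).base := ⟨y, rfl⟩
        rwa [range_jA] at hy
      obtain ⟨x', hx'⟩ := h1
      have h2 : x' ∈ Set.range (jB φ f).base := by
        rw [range_jB]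
        have hgx : g.base x' ∈ PrimeSpectrum.basicOpen f := by
          rw [hx']
          have hy : (jA f).base y ∈ Set.range (jA f).base := ⟨y, rfl⟩
          rwa [range_jA] at hy
        exact (base_mem_basicOpen φ f x').mp hgx
      obtain ⟨z, hz⟩ := h2
      refine ⟨z, (jA f).isOpenEmbedding.injective ?_⟩
      have hcomm := congrArg
        (fun m : Spec (CommRingCat.of (Localization.Away (φ f))) ⟶ Spec (CommRingCat.of A) =>
          m.base z) (sqSpec φ f)
      change g.base ((jB φ f).base z) = (jA f).base ((hh φ f).base z) at hcomm
      rw [show ((jA f).base ((hh φ f).base z) : PrimeSpectrum A) = g.base ((jB φ f).base z)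
        from hcomm.symm, hz, hx']
    have hepi : Epi (hh φ f).base := (TopCat.epi_iff_surjective _).mpr hsurj
    have hiso : IsIso (hh φ f) := IsOpenImmersion.isIso _
    have hiso2 : IsIso (CommRingCat.ofHom (Localization.awayMap φ f)) := by
      have : IsIso (Scheme.Spec.map (CommRingCat.ofHom (Localization.awayMap φ f)).op) := hiso
      have := isIso_of_reflects_iso (CommRingCat.ofHom (Localization.awayMap φ f)).op Scheme.Spec
      exact (isIso_op_iff _).mp this
    have hfP : f ∈ P := (hP f).mpr ((ConcreteCategory.isIso_iff_bijective _).mp hiso2)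
    have : φ f ∈ q := hq (Ideal.mem_map_of_mem φ hfP)
    exact ((base_mem_basicOpen φ f x).mp hpf) this
  · intro hT
    -- each point of Spec B lies in some D(φ f), f ∈ P
    have key : ∀ x : PrimeSpectrum B, ∃ f ∈ P, φ f ∉ x.asIdeal := by
      intro x
      by_contra hcon
      push_neg at hcon
      have : Ideal.map φ P ≤ x.asIdeal := by
        rw [Ideal.map_le_iff_le_comap]
        intro f hf
        exact hcon f hf
      rw [hT] at this
      exact x.isPrime.ne_top (top_le_iff.mp this)
    have hiso : ∀ f ∈ P, IsIso (hh φ f) := by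
      intro f hf
      have : IsIso (CommRingCat.ofHom (Localization.awayMap φ f)) :=
        (ConcreteCategory.isIso_iff_bijective _).mpr ((hP f).mp hf)
      exact inferInstanceAs (IsIso (Scheme.Spec.map (CommRingCat.ofHom
        (Localization.awayMap φ f)).op))
    have hoi : ∀ f ∈ P, IsOpenImmersion (jB φ f ≫ g) := by
      intro f hf
      rw [hg, sqSpec]
      have := hiso f hf
      infer_instance
    -- membership in range of jB
    have hmem : ∀ (f : A) (x : PrimeSpectrum B), φ f ∉ x.asIdeal →
        ∃ z, (jB φ f).base z = x := by
      intro f x hx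
      have : x ∈ Set.range (jB φ f).base := by
        rw [range_jB]; exact hx
      exact this
    have hstalk : ∀ x : PrimeSpectrum B, IsIso (g.stalkMap x) := by
      intro x
      obtain ⟨f, hfP, hfx⟩ := key x
      obtain ⟨z, hz⟩ := hmem f x hfx
      haveI := hoi f hfP
      have hc : IsIso ((jB φ f ≫ g).stalkMap z) := inferInstance
      rw [Scheme.Hom.stalkMap_comp] at hc
      rw [← hz]
      haveI : IsIso (g.stalkMap ((jB φ f) z) ≫ (jB φ f).stalkMap z) := hc
      exact IsIso.of_isIso_comp_right _ ((jB φ f).stalkMap z)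
    have hemb : IsOpenEmbedding g.base := by
      apply IsOpenEmbedding.of_continuous_injective_isOpenMap
      · exact g.base.hom.continuous
      · intro x x' hxx
        obtain ⟨f, hfP, hfx⟩ := key x
        have hfx' : φ f ∉ x'.asIdeal := by
          have h1 : g.base x ∈ PrimeSpectrum.basicOpen f :=
            (base_mem_basicOpen φ f x).mpr hfx
          rw [hxx] at h1
          exact (base_mem_basicOpen φ f x').mp h1
        obtain ⟨z, hz⟩ := hmem f x hfx
        obtain ⟨z', hz'⟩ := hmem f x' hfx'
        have := hoi f hfP
        have hinj := (jB φ f ≫ g).isOpenEmbedding.injective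
        have : z = z' := by
          apply hinj
          show g.base ((jB φ f).base z) = g.base ((jB φ f).base z')
          rw [hz, hz', hxx]
        rw [← hz, ← hz', this]
      · intro O hO
        rw [isOpen_iff_forall_mem_open]
        rintro y ⟨x, hxO, rfl⟩
        obtain ⟨f, hfP, hfx⟩ := key x
        obtain ⟨z, hz⟩ := hmem f x hfx
        have := hoi f hfP
        refine ⟨(jB φ f ≫ g).base '' ((jB φ f).base ⁻¹' O), ?_, ?_, ?_⟩
        · rintro _ ⟨w, hw, rfl⟩
          exact ⟨(jB φ f).base w, hw, rfl⟩
        · exact (jB φ f ≫ g).isOpenEmbedding.isOpenMap _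
            (hO.preimage (jB φ f).base.hom.continuous)
        · exact ⟨z, by rw [Set.mem_preimage, hz]; exact hxO, by
            show g.base ((jB φ f).base z) = g.base x
            rw [hz]⟩
    exact @IsOpenImmersion.of_isIso_stalkMap _ _ g hemb hstalk
end

section
/- (Lemma 14.5, description of the image.) Let φ : A → B be a homomorphism of commutative rings, and let P be an ideal of A whose elements are exactly those f ∈ A such that the induced homomorphism A[1/f] → B[1/φ(f)] between the localizations away from f and away from φ(f) is bijective. If the ideal generated by φ(P) in B is the unit ideal of B (equivalently, if Spec B → Spec A is an open immersion), then the image of the map Spec B → Spec A induced by φ is the open subset of Spec A complementary to the closed set V(P) of primes containing P; that is, the range of the induced map on prime spectra equals the complement of the zero locus of P. -/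
/-- Lemma 14.5 (description of the image): let `φ : A → B` be a homomorphism of
commutative rings and `P` the ideal of those `f ∈ A` such that the induced map
`A[1/f] → B[1/φ(f)]` is bijective.  If `φ(P)` generates the unit ideal of `B`, then the
image of `Spec B → Spec A` is the complement of the zero locus `V(P)`. -/
theorem stmt11 {A B : Type*} [CommRing A] [CommRing B] (φ : A →+* B)
    (P : Ideal A)
    (hP : ∀ f : A, f ∈ P ↔ Function.Bijective (Localization.awayMap φ f))
    (hunit : Ideal.map φ P = ⊤) :
    Set.range (PrimeSpectrum.comap φ) =
      (PrimeSpectrum.zeroLocus (P : Set A))ᶜ := by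
  ext p
  constructor
  · rintro ⟨q, rfl⟩ hmem
    rw [PrimeSpectrum.mem_zeroLocus] at hmem
    have : Ideal.map φ P ≤ q.asIdeal := Ideal.map_le_iff_le_comap.mpr hmem
    rw [hunit] at this
    exact q.isPrime.ne_top (top_le_iff.mp this)
  · intro hmem
    rw [Set.mem_compl_iff, PrimeSpectrum.mem_zeroLocus, Set.not_subset] at hmem
    obtain ⟨f, hfP, hfp⟩ := hmem
    have hbij := (hP f).mp hfP
    -- p is in the basic open of f, hence in the range of Spec A_f → Spec A
    have hrange : p ∈ Set.range
        (PrimeSpectrum.comap (algebraMap A (Localization.Away f))) := by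
      rw [PrimeSpectrum.localization_away_comap_range (Localization.Away f) f]
      exact hfp
    obtain ⟨p', hp'⟩ := hrange
    let e : Localization.Away f ≃+* Localization.Away (φ f) :=
      RingEquiv.ofBijective (Localization.awayMap φ f) hbij
    let q' : Ideal (Localization.Away (φ f)) := Ideal.comap e.symm.toRingHom p'.asIdeal
    have hq' : q'.IsPrime := Ideal.comap_isPrime _ _
    refine ⟨PrimeSpectrum.comap (algebraMap B (Localization.Away (φ f))) ⟨q', hq'⟩, ?_⟩
    rw [← hp']
    ext x
    have hcomm : (Localization.awayMap φ f).comp (algebraMap A (Localization.Away f))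
        = (algebraMap B (Localization.Away (φ f))).comp φ :=
      IsLocalization.map_comp _
    have key : e.symm.toRingHom ((algebraMap B (Localization.Away (φ f))) (φ x))
        = algebraMap A (Localization.Away f) x := by
      have : (algebraMap B (Localization.Away (φ f))) (φ x)
          = e (algebraMap A (Localization.Away f) x) := by
        have := congrArg (fun g => g x) hcomm
        simpa [e] using this.symm
      rw [this]
      exact e.symm_apply_apply _
    simp only [PrimeSpectrum.comap_asIdeal, Ideal.mem_comap]
    show φ x ∈ Ideal.comap _ q' ↔ _
    rw [Ideal.mem_comap]
    show e.symm.toRingHom _ ∈ p'.asIdeal ↔ _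
    rw [key]
end

section
/- (Lemma 25.2.) Let k be a field and let m, n ≥ 0. Let the symmetric group S_n act on the polynomial ring k[Z₁,…,Z_m,X₁,…,X_n] by permuting the variables X₁,…,X_n (leaving the Z's fixed), and hence act on the prime spectrum Spec k[Z₁,…,Z_m,X₁,…,X_n] via the induced homeomorphisms. Let g₁,…,g_r ∈ k[Z₁,…,Z_m,X₁,…,X_n] and suppose that the Zariski-closed subset F = V(g₁,…,g_r) of the prime spectrum satisfies σ(F) = F for every σ ∈ S_n. Then there exist finitely many polynomials f₁,…,f_s ∈ k[Z₁,…,Z_m,X₁,…,X_n], each invariant under every σ ∈ S_n (i.e. totally symmetric in the variables X₁,…,X_n), such that F = V(f₁,…,f_s). -/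
open Polynomial in
/-- For a prime ideal `p`, the lower coefficients of `∏ (X - C (a t))` all lie in `p`
iff all the `a t` lie in `p`. -/
private lemma aux_coeff_iff {R : Type*} [CommRing R] {ι : Type*} [Fintype ι]
    (a : ι → R) (p : Ideal R) (hp : p.IsPrime) :
    (∀ j : Fin (Fintype.card ι),
        (∏ t : ι, (X - C (a t))).coeff (j : ℕ) ∈ p) ↔ ∀ t, a t ∈ p := by
  classical
  have : Nontrivial R := by
    by_contra h
    rw [not_nontrivial_iff_subsingleton] at h
    exact hp.ne_top (Subsingleton.elim _ _)
  set N := Fintype.card ι with hN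
  set P : Polynomial R := ∏ t : ι, (X - C (a t)) with hP
  have hmonic : P.Monic := monic_prod_of_monic _ _ fun t _ => monic_X_sub_C _
  have hdeg : P.natDegree = N := by
    rw [hP, Polynomial.natDegree_prod_of_monic _ _ fun t _ => monic_X_sub_C _]
    simp [hN, Polynomial.natDegree_X_sub_C, Polynomial.natDegree_X]
  constructor
  · intro h t
    have heval : P.eval (a t) = 0 := by
      rw [hP, Polynomial.eval_prod]
      apply Finset.prod_eq_zero (Finset.mem_univ t)
      simp
    rw [Polynomial.eval_eq_sum_range, hdeg, Finset.sum_range_succ] at heval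
    have hcN : P.coeff N = 1 := by
      have h' := hmonic.coeff_natDegree
      rwa [hdeg] at h'
    rw [hcN, one_mul] at heval
    have hsum : ∑ j ∈ Finset.range N, P.coeff j * a t ^ j ∈ p :=
      Ideal.sum_mem _ fun j hj =>
        Ideal.mul_mem_right _ _ (h ⟨j, Finset.mem_range.mp hj⟩)
    have hpow : a t ^ N ∈ p := by
      have h3 : a t ^ N = -(∑ j ∈ Finset.range N, P.coeff j * a t ^ j) := by
        linear_combination heval
      rw [h3]; exact neg_mem hsum
    exact hp.mem_of_pow_mem N hpow
  · intro h j
    have hmap : Polynomial.map (Ideal.Quotient.mk p) P = Polynomial.X ^ N := by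
      rw [hP, Polynomial.map_prod]
      have h1 : ∀ t ∈ Finset.univ,
          Polynomial.map (Ideal.Quotient.mk p) (X - C (a t)) = Polynomial.X := by
        intro t _
        rw [Polynomial.map_sub, Polynomial.map_X, Polynomial.map_C,
          Ideal.Quotient.eq_zero_iff_mem.mpr (h t), Polynomial.C_0, sub_zero]
      rw [Finset.prod_congr rfl h1, Finset.prod_const, Finset.card_univ]
    have h0 : Ideal.Quotient.mk p (P.coeff (j : ℕ)) = 0 := by
      have h2 := congrArg (fun q => Polynomial.coeff q (j : ℕ)) hmap
      simpa [Polynomial.coeff_map, Polynomial.coeff_X_pow, (Fin.is_lt j).ne] using h2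
    exact Ideal.Quotient.eq_zero_iff_mem.mp h0

open Polynomial in
/-- A ring endomorphism permuting the family `a` fixes the coefficients of
`∏ (X - C (a t))`. -/
private lemma aux_map_coeff {R : Type*} [CommRing R] {ι : Type*} [Fintype ι]
    (a : ι → R) (e : R →+* R) (ε : ι ≃ ι) (h : ∀ t, e (a t) = a (ε t)) (j : ℕ) :
    e ((∏ t : ι, (X - C (a t))).coeff j) = (∏ t : ι, (X - C (a t))).coeff j := by
  have hmap : Polynomial.map e (∏ t : ι, (X - C (a t))) = ∏ t : ι, (X - C (a t)) := by
    rw [Polynomial.map_prod]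
    have h1 : ∀ t : ι, Polynomial.map e (X - C (a t)) = X - C (a (ε t)) := by
      intro t
      rw [Polynomial.map_sub, Polynomial.map_X, Polynomial.map_C, h t]
    simp_rw [h1]
    exact Equiv.prod_comp ε fun t => X - C (a t)
  calc e ((∏ t : ι, (X - C (a t))).coeff j)
      = (Polynomial.map e (∏ t : ι, (X - C (a t)))).coeff j := (Polynomial.coeff_map _ _).symm
    _ = (∏ t : ι, (X - C (a t))).coeff j := by rw [hmap]

/-- Lemma 25.2: if a Zariski-closed subset `F = V(g₁,…,g_r)` of
`Spec k[Z₁,…,Z_m,X₁,…,X_n]` is invariant under the action of the symmetric group `Sₙ`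
permuting the variables `X₁,…,Xₙ`, then `F` can be defined by finitely many equations
`f₁ = ⋯ = f_s = 0` where each `fᵢ` is totally symmetric in `X₁,…,Xₙ`. -/
theorem stmt12 {k : Type*} [Field k] (m n r : ℕ)
    (g : Fin r → MvPolynomial (Fin m ⊕ Fin n) k)
    (hinv : ∀ σ : Equiv.Perm (Fin n),
      (PrimeSpectrum.comap
          (MvPolynomial.rename (Equiv.sumCongr (Equiv.refl (Fin m)) σ)).toRingHom) ''
        PrimeSpectrum.zeroLocus (Set.range g) =
        PrimeSpectrum.zeroLocus (Set.range g)) :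
    ∃ (s : ℕ) (f : Fin s → MvPolynomial (Fin m ⊕ Fin n) k),
      (∀ (i : Fin s) (σ : Equiv.Perm (Fin n)),
        MvPolynomial.rename (Equiv.sumCongr (Equiv.refl (Fin m)) σ) (f i) = f i) ∧
      PrimeSpectrum.zeroLocus (Set.range f) =
        PrimeSpectrum.zeroLocus (Set.range g) := by
  classical
  let φ : Equiv.Perm (Fin n) →
      (MvPolynomial (Fin m ⊕ Fin n) k →ₐ[k] MvPolynomial (Fin m ⊕ Fin n) k) := fun σ =>
    MvPolynomial.rename (Equiv.sumCongr (Equiv.refl (Fin m)) σ)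
  let a : Fin r → Equiv.Perm (Fin n) → MvPolynomial (Fin m ⊕ Fin n) k :=
    fun i σ => φ σ (g i)
  let N : ℕ := Fintype.card (Equiv.Perm (Fin n))
  let P : Fin r → Polynomial (MvPolynomial (Fin m ⊕ Fin n) k) := fun i =>
    ∏ σ : Equiv.Perm (Fin n), (Polynomial.X - Polynomial.C (a i σ))
  have hfun : ∀ τ σ : Equiv.Perm (Fin n),
      (⇑(Equiv.sumCongr (Equiv.refl (Fin m)) τ)) ∘ (⇑(Equiv.sumCongr (Equiv.refl (Fin m)) σ)) =
        ⇑(Equiv.sumCongr (Equiv.refl (Fin m)) (τ * σ)) := by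
    intro τ σ
    funext y; cases y <;> rfl
  have hcomp : ∀ (τ σ : Equiv.Perm (Fin n)) (x : MvPolynomial (Fin m ⊕ Fin n) k),
      φ τ (φ σ x) = φ (τ * σ) x := by
    intro τ σ x
    show MvPolynomial.rename _ (MvPolynomial.rename _ x) = MvPolynomial.rename _ x
    rw [MvPolynomial.rename_rename, hfun]
  have hφ1 : ∀ x : MvPolynomial (Fin m ⊕ Fin n) k, φ 1 x = x := by
    intro x
    show MvPolynomial.rename _ x = x
    have h : ⇑(Equiv.sumCongr (Equiv.refl (Fin m)) (1 : Equiv.Perm (Fin n))) = id := by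
      funext y; cases y <;> rfl
    rw [h, MvPolynomial.rename_id, AlgHom.id_apply]
  -- symmetry of the coefficients of P i
  have hsym : ∀ i j τ, φ τ ((P i).coeff j) = (P i).coeff j := fun i j τ =>
    aux_map_coeff (a i) (φ τ).toRingHom (Equiv.mulLeft τ) (fun σ => hcomp τ σ (g i)) j
  -- invariance implies all a i τ lie in any prime of V(g)
  have hmem : ∀ p : PrimeSpectrum (MvPolynomial (Fin m ⊕ Fin n) k),
      p ∈ PrimeSpectrum.zeroLocus (Set.range g) → ∀ i τ, a i τ ∈ p.asIdeal := by
    intro p hp i τ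
    have hp' : p ∈ (PrimeSpectrum.comap
          (MvPolynomial.rename (Equiv.sumCongr (Equiv.refl (Fin m)) τ⁻¹)).toRingHom) ''
        PrimeSpectrum.zeroLocus (Set.range g) := by
      rw [hinv τ⁻¹]; exact hp
    obtain ⟨q, hq, hqp⟩ := hp'
    rw [← hqp, PrimeSpectrum.comap_asIdeal, Ideal.mem_comap]
    have h2 : (MvPolynomial.rename
        (Equiv.sumCongr (Equiv.refl (Fin m)) τ⁻¹)).toRingHom (a i τ) = g i := by
      show φ τ⁻¹ (φ τ (g i)) = g i
      rw [hcomp, inv_mul_cancel, hφ1]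
    rw [h2]
    exact hq (Set.mem_range_self i)
  -- the coefficient criterion
  have hcoeff : ∀ (p : PrimeSpectrum (MvPolynomial (Fin m ⊕ Fin n) k)) (i : Fin r),
      (∀ j : Fin N, (P i).coeff (j : ℕ) ∈ p.asIdeal) ↔ (∀ τ, a i τ ∈ p.asIdeal) :=
    fun p i => aux_coeff_iff (a i) p.asIdeal p.2
  -- assemble
  let F : Fin r × Fin N → MvPolynomial (Fin m ⊕ Fin n) k := fun ij => (P ij.1).coeff (ij.2 : ℕ)
  refine ⟨r * N, fun j => F (finProdFinEquiv.symm j), ?_, ?_⟩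
  · intro j τ
    exact hsym _ _ τ
  · have hrange : Set.range (fun j : Fin (r * N) => F (finProdFinEquiv.symm j)) = Set.range F :=
      Function.Surjective.range_comp finProdFinEquiv.symm.surjective F
    rw [hrange]
    ext p
    simp only [PrimeSpectrum.mem_zeroLocus]
    constructor
    · intro hF
      rintro x ⟨i, rfl⟩
      have hall : ∀ τ, a i τ ∈ p.asIdeal :=
        (hcoeff p i).mp fun j => hF ⟨(i, j), rfl⟩
      have hgi : g i = a i 1 := (hφ1 (g i)).symm
      rw [hgi]
      exact hall 1
    · intro hg
      rintro x ⟨⟨i, j⟩, rfl⟩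
      exact (hcoeff p i).mpr (hmem p hg i) j
end

section
/- (Group-theoretic fact used in the proof of Proposition 1.4.7.) Let ℓ be a prime and let H'' ≤ H' ≤ H be finite groups such that H'' is normal in H', H' is normal in H, and both indices [H : H'] and [H' : H''] are powers of ℓ. Then the normal core of H'' in H, namely the subgroup ⋂_{h ∈ H} hH''h⁻¹, has index in H equal to a power of ℓ. -/
open Subgroup

lemma aux_inf_index_dvd {G : Type*} [Group G] (K L : Subgroup G) [K.Normal] :
    (K ⊓ L).index ∣ K.index * L.index := by
  rw [← Subgroup.relIndex_mul_index (inf_le_right : K ⊓ L ≤ L)]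
  exact Nat.mul_dvd_mul
    (by rw [Subgroup.inf_relIndex_right]; exact Subgroup.relIndex_dvd_index_of_normal K L)
    dvd_rfl

lemma aux_index_iInf_dvd {G : Type*} [Group G] {ι : Type*} [Fintype ι]
    (f : ι → Subgroup G) (hn : ∀ i, (f i).Normal) :
    (⨅ i, f i).index ∣ ∏ i, (f i).index := by
  classical
  have key : ∀ s : Finset ι, (⨅ i ∈ s, f i).index ∣ ∏ i ∈ s, (f i).index := by
    intro s
    induction s using Finset.induction_on with
    | empty => simp
    | @insert a s ha ih =>
      rw [Finset.iInf_insert, Finset.prod_insert ha]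
      haveI := hn a
      exact (aux_inf_index_dvd (f a) _).trans (Nat.mul_dvd_mul dvd_rfl ih)
  simpa using key Finset.univ

/-- Group-theoretic fact used in the proof of Proposition 1.4.7: if `H'' ≤ H' ≤ H` are
finite groups with `H''` normal in `H'`, `H'` normal in `H`, and both indices
`[H : H']` and `[H' : H'']` powers of a prime `ℓ`, then the normal core
`⋂_{h ∈ H} hH''h⁻¹` of `H''` in `H` has index a power of `ℓ` in `H`. -/
theorem stmt15 (ℓ : ℕ) (hℓ : ℓ.Prime) {H : Type*} [Group H] [Finite H]
    (H'' H' : Subgroup H) (hle : H'' ≤ H')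
    (hnorm'' : (H''.subgroupOf H').Normal) (hnorm' : H'.Normal)
    (h1 : ∃ a, H'.index = ℓ ^ a)
    (h2 : ∃ b, (H''.subgroupOf H').index = ℓ ^ b) :
    ∃ c, H''.normalCore.index = ℓ ^ c := by
  classical
  haveI := Fintype.ofFinite H
  obtain ⟨a, ha⟩ := h1
  obtain ⟨b, hb⟩ := h2
  set N := H''.normalCore with hNdef
  -- the conjugates of H'' inside H', as subgroups of H'
  let f : H → Subgroup H' := fun h =>
    (H''.subgroupOf H').map (MulAut.conjNormal h : MulAut H').toMonoidHom
  have hn : ∀ h, (f h).Normal := fun h =>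
    hnorm''.map _ (MulEquiv.surjective _)
  have hidx : ∀ h, (f h).index = ℓ ^ b := by
    intro h
    have hker : ((MulAut.conjNormal h : MulAut H').toMonoidHom).ker = ⊥ :=
      (MonoidHom.ker_eq_bot_iff _).mpr (MulEquiv.injective _)
    rw [Subgroup.index_map_eq _ (MulEquiv.surjective _) (hker ▸ bot_le), hb]
  have hNle : N ≤ H' := H''.normalCore_le.trans hle
  have hNsub : N.subgroupOf H' = ⨅ h, f h := by
    ext x
    simp only [Subgroup.mem_iInf, Subgroup.mem_subgroupOf, f]
    have hmem : ↑x ∈ N ↔ ∀ g : H, g * ↑x * g⁻¹ ∈ H'' := Iff.rfl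
    rw [hmem]
    constructor
    · intro hx h
      rw [Subgroup.mem_map_equiv]
      have := hx (h⁻¹ : H)
      simp only [inv_inv] at this
      simpa only [Subgroup.mem_subgroupOf, MulAut.conjNormal_symm_apply] using this
    · intro hx g
      have := hx g⁻¹
      rw [Subgroup.mem_map_equiv] at this
      simp only [Subgroup.mem_subgroupOf, MulAut.conjNormal_symm_apply, inv_inv] at this
      exact this
  have hrel : N.relIndex H' ∣ ℓ ^ (b * Fintype.card H) := by
    have : N.relIndex H' = (⨅ h, f h).index := by
      rw [Subgroup.relIndex, hNsub]
    rw [this]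
    calc (⨅ h, f h).index ∣ ∏ h : H, (f h).index := aux_index_iInf_dvd f hn
      _ = ℓ ^ (b * Fintype.card H) := by
          simp [hidx, Finset.prod_const, ← pow_mul]
  have hdvd : N.index ∣ ℓ ^ (b * Fintype.card H + a) := by
    rw [← Subgroup.relIndex_mul_index hNle, pow_add]
    exact Nat.mul_dvd_mul hrel (ha ▸ dvd_rfl)
  obtain ⟨c, -, hc⟩ := (Nat.dvd_prime_pow hℓ).mp hdvd
  exact ⟨c, hc⟩
end

section
/- (Univariate satisfiability criterion from the proof of Proposition 23.1.) Let k be an algebraically closed field, let f₁,…,f_r ∈ k[Y] be univariate polynomials not all zero, let g ∈ k[Y], and let u be a greatest common divisor of f₁,…,f_r in k[Y]. Then there exists x ∈ k such that f_i(x) = 0 for all 1 ≤ i ≤ r and g(x) ≠ 0, if and only if u does not divide g^(deg u), where deg u denotes the degree of u. -/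
/-- Univariate satisfiability criterion from the proof of Proposition 23.1: over an
algebraically closed field `k`, given univariate polynomials `f₁,…,f_r` (not all zero),
`g`, and a greatest common divisor `u` of the `fᵢ`, there is `x ∈ k` with `fᵢ(x) = 0`
for all `i` and `g(x) ≠ 0` if and only if `u` does not divide `g ^ (deg u)`. -/
theorem stmt16 {k : Type*} [Field k] [IsAlgClosed k] (r : ℕ)
    (f : Fin r → Polynomial k) (hf : ∃ i, f i ≠ 0) (g : Polynomial k)
    (u : Polynomial k) (hu₁ : ∀ i, u ∣ f i)
    (hu₂ : ∀ v : Polynomial k, (∀ i, v ∣ f i) → v ∣ u) :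
    (∃ x : k, (∀ i, (f i).eval x = 0) ∧ g.eval x ≠ 0) ↔
      ¬ u ∣ g ^ u.natDegree := by
  obtain ⟨i₀, hi₀⟩ := hf
  have hu0 : u ≠ 0 := fun h => hi₀ (zero_dvd_iff.mp (h ▸ hu₁ i₀))
  -- common zeros of f = roots of u
  have hkey : ∀ x : k, (∀ i, (f i).eval x = 0) ↔ u.eval x = 0 := by
    intro x
    constructor
    · intro h
      have hdvd : Polynomial.X - Polynomial.C x ∣ u :=
        hu₂ _ (fun i => Polynomial.dvd_iff_isRoot.mpr (h i))
      have := Polynomial.eval_dvd hdvd (x := x)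
      simpa using this
    · intro h i
      have := Polynomial.eval_dvd (hu₁ i) (x := x)
      simpa [h] using this
  simp only [hkey]
  constructor
  · rintro ⟨x, hx, hgx⟩ hdvd
    have := Polynomial.eval_dvd hdvd (x := x)
    rw [hx] at this
    simp only [zero_dvd_iff, Polynomial.eval_pow] at this
    rcases Nat.eq_zero_or_pos u.natDegree with h0 | hpos
    · -- u is a nonzero constant, has no roots
      have : u = Polynomial.C (u.coeff 0) := Polynomial.eq_C_of_natDegree_eq_zero h0
      rw [this] at hx
      simp at hx
      rw [this] at hu0
      simp at hu0
      exact hu0 hx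
    · exact hgx (pow_eq_zero_iff hpos.ne' |>.mp this)
  · intro hndvd
    by_contra hne
    push_neg at hne
    apply hndvd
    -- every root of u is a root of g
    have hroots : ∀ a ∈ u.roots, (Polynomial.X - Polynomial.C a) ∣ g := by
      intro a ha
      have hua : u.eval a = 0 := Polynomial.isRoot_of_mem_roots ha
      exact Polynomial.dvd_iff_isRoot.mpr (hne a hua)
    have hsplit := Polynomial.C_leadingCoeff_mul_prod_multiset_X_sub_C
      (p := u) ((Polynomial.splits_iff_card_roots (f := u)).mp (IsAlgClosed.splits u))
    calc u = Polynomial.C u.leadingCoeff *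
          (u.roots.map fun a => Polynomial.X - Polynomial.C a).prod := hsplit.symm
      _ ∣ (u.roots.map fun a => Polynomial.X - Polynomial.C a).prod := by
          exact (Polynomial.isUnit_C.mpr (isUnit_iff_ne_zero.mpr
            (Polynomial.leadingCoeff_ne_zero.mpr hu0))).mul_left_dvd.mpr dvd_rfl
      _ ∣ (u.roots.map fun _ => g).prod := by
          apply Multiset.prod_dvd_prod_of_dvd
          intro a ha
          exact hroots a ha
      _ = g ^ u.natDegree := by
          rw [Multiset.map_const', Multiset.prod_replicate,
            (Polynomial.splits_iff_card_roots (f := u)).mp (IsAlgClosed.splits u)]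
end
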